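/- Let n ≥ 0, k ≥ 2, and let c = s_{n+1} ⋯ s_{n+k} ∈ B_{n+k+1}. Then: (1) for any w ∈ (B_n × S_k) w_{n,k} ⊆ B_{n+k}, one has ℓ(c w c^{−1}) = ℓ(c) + ℓ(w) + ℓ(c^{−1}) and c w c^{−1} ∈ (B_{n+1} × S_k) w_{n+1,k}; (2) for any w ∈ (B_{n+1} × S_k) w_{n+1,k} ⊆ B_{n+k+1}, one has c^{−1} w x ∉ B_{n+k} for every x strictly below c in the Bruhat order, and c^{−1} w c ∈ (B_n × S_k) w_{n,k} if and only if c^{−1} w c ∈ B_{n+k}. -/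

import Mathlib

namespace PaperB

open scoped Classical

def B (n : ℕ) : Subgroup (Equiv.Perm ℤ) where
  carrier := {w | (∀ i : ℤ, w (-i) = - w i) ∧ ∀ i : ℤ, (n : ℤ) < |i| → w i = i}
  one_mem' := ⟨fun _ => rfl, fun _ _ => rfl⟩
  mul_mem' := by
    rintro a b ⟨ha1, ha2⟩ ⟨hb1, hb2⟩
    refine ⟨fun i => ?_, fun i hi => ?_⟩
    · rw [Equiv.Perm.mul_apply, Equiv.Perm.mul_apply, hb1, ha1]
    · rw [Equiv.Perm.mul_apply, hb2 i hi, ha2 i hi]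
  inv_mem' := by
    rintro a ⟨ha1, ha2⟩
    refine ⟨fun i => a.injective ?_, fun i hi => a.injective ?_⟩
    · rw [Equiv.Perm.inv_def, Equiv.apply_symm_apply, ha1, Equiv.apply_symm_apply]
    · rw [Equiv.Perm.inv_def, Equiv.apply_symm_apply, ha2 i hi]

def t : Equiv.Perm ℤ := Equiv.swap (-1) 1

def s (i : ℕ) : Equiv.Perm ℤ :=
  Equiv.swap (i : ℤ) ((i : ℤ) + 1) * Equiv.swap (-(i : ℤ)) (-((i : ℤ) + 1))

def gens (n : ℕ) : Set (Equiv.Perm ℤ) := insert t (s '' Set.Ico 1 n)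

noncomputable def len (n : ℕ) (w : Equiv.Perm ℤ) : ℕ :=
  sInf {l | ∃ L : List (Equiv.Perm ℤ), (∀ g ∈ L, g ∈ gens n) ∧ L.prod = w ∧ L.length = l}

/-- A model of the Iwahori–Hecke algebra `H_{p,q}(Bₘ)`:  a `ℂ`-algebra `H` together with a
family `T w`, `w ∈ Bₘ`, which is linearly independent, satisfies `T 1 = 1`, and satisfies the
standard multiplication rule
`T w * T g = T (w g)` if `ℓ(w g) > ℓ(w)` and
`T w * T g = par(g) T (w g) + (1 - par(g)) T w` otherwise,
where `par t = p` and `par sᵢ = q`. -/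
structure HeckeModel (m : ℕ) (p q : ℂ) (H : Type) [Ring H] [Algebra ℂ H] where
  T : Equiv.Perm ℤ → H
  T_one : T 1 = 1
  T_mul : ∀ w ∈ B m, ∀ g ∈ gens m,
    T w * T g =
      if len m w < len m (w * g) then T (w * g)
      else (if g = t then p else q) • T (w * g) + (1 - if g = t then p else q) • T w
  free : LinearIndependent ℂ (fun w : {x // x ∈ B m} => T w.1)

/-- The element `-w`, given by `(-w)(i) = -(w i)`. -/
def negOf (w : Equiv.Perm ℤ) : Equiv.Perm ℤ := (Equiv.neg ℤ : Equiv.Perm ℤ) * w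

/-- A good involution in `B_k`. -/
def Good (k : ℕ) (w : Equiv.Perm ℤ) : Prop :=
  w ∈ B k ∧ w * w = 1 ∧ ∀ i : ℤ, 1 ≤ i → i ≤ (k : ℤ) → (w i = i ∨ w i < 0)

/-- `a(w)`: the number of `1 ≤ j ≤ m` with `w j = j`. -/
noncomputable def aFix (m : ℕ) (w : Equiv.Perm ℤ) : ℕ :=
  ((Finset.Icc (1 : ℤ) (m : ℤ)).filter fun j => w j = j).card

/-- `d(i, w)`: the number of `i < j ≤ m` with `w j = j`. -/
noncomputable def dFix (m : ℕ) (i : ℤ) (w : Equiv.Perm ℤ) : ℕ :=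
  ((Finset.Ioc i (m : ℤ)).filter fun j => w j = j).card

/-- `c(w)`: the number of `w`-tidy pairs `{i, j}`, i.e. pairs of distinct indices
`1 ≤ i, j ≤ m` with `-w i < j` and `-w j < i`. -/
noncomputable def cTidy (m : ℕ) (w : Equiv.Perm ℤ) : ℕ :=
  (((Finset.Icc (1 : ℤ) (m : ℤ)) ×ˢ (Finset.Icc (1 : ℤ) (m : ℤ))).filter
    fun pr => pr.1 < pr.2 ∧ -w pr.1 < pr.2 ∧ -w pr.2 < pr.1).card

/-- `x = t s₁ s₂ ⋯ s_k ∈ B_{k+1}`. -/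
def xE (k : ℕ) : Equiv.Perm ℤ := (t :: ((List.range k).map fun j => s (j + 1))).prod

/-- `xᵢ = t s₁ ⋯ ŝᵢ ⋯ s_k ∈ B_{k+1}` (the product with `sᵢ` omitted). -/
def xI (k i : ℕ) : Equiv.Perm ℤ :=
  (t :: ((((List.range k).map fun j => j + 1).filter fun j => j ≠ i).map s)).prod


/-- The parabolic subgroup `S_k ⊆ B_k` generated by `s₁, …, s_{k-1}`. -/
def Spar (k : ℕ) : Subgroup (Equiv.Perm ℤ) := Subgroup.closure (s '' Set.Ico 1 k)

/-- `c(-w)` for `w ∈ S_k`: the number of neat pairs of `w`, i.e. pairs `{i,j}` of distinct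
indices `1 ≤ i, j ≤ k` with `w i < j` and `w j < i`. -/
noncomputable def cNeat (k : ℕ) (w : Equiv.Perm ℤ) : ℕ :=
  (((Finset.Icc (1 : ℤ) (k : ℤ)) ×ˢ (Finset.Icc (1 : ℤ) (k : ℤ))).filter
    fun pr => pr.1 < pr.2 ∧ w pr.1 < pr.2 ∧ w pr.2 < pr.1).card

/-- The set `X_{0,k}` of distinguished (minimal length) right coset representatives of
`S_k` in `B_k`. -/
def X0 (k : ℕ) : Set (Equiv.Perm ℤ) :=
  {x | x ∈ B k ∧ ∀ u ∈ Spar k, len k x ≤ len k (u * x)}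

/-- `Succ(w)` for a good involution `w ∈ G_k`. -/
def Succ (k : ℕ) (w : Equiv.Perm ℤ) : Set (Equiv.Perm ℤ) :=
  {xE k * w * (xE k)⁻¹, xE k * w * (xE k)⁻¹ * t} ∪
    {y | ∃ i : ℕ, 1 ≤ i ∧ i ≤ k ∧ w (i : ℤ) = (i : ℤ) ∧ y = xE k * w * (xI k i)⁻¹}

/-- The element `c = s_{n+1} s_{n+2} ⋯ s_{n+k} ∈ B_{n+k+1}`. -/
def cElt (n k : ℕ) : Equiv.Perm ℤ := ((List.range k).map fun j => s (n + 1 + j)).prod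

/-- The palindromic product `s_{n+k} s_{n+k-1} ⋯ s_{n+i} ⋯ s_{n+k-1} s_{n+k}`. -/
def pal (n k i : ℕ) : Equiv.Perm ℤ :=
  (((List.range (k - i)).map fun j => s (n + k - j)) ++ [s (n + i)] ++
    ((List.range (k - i)).map fun j => s (n + i + 1 + j))).prod

/-- The parabolic subgroup `B_n × S_k` of `B_{n+k}`, generated by
`{t, s₁, …, s_{n-1}} ∪ {s_{n+1}, …, s_{n+k-1}}` (with `t` omitted when `n = 0`). -/
def P (n k : ℕ) : Subgroup (Equiv.Perm ℤ) :=
  Subgroup.closure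
    ((if n = 0 then (∅ : Set (Equiv.Perm ℤ)) else {t}) ∪ s '' Set.Ico 1 n ∪
      s '' Set.Ico (n + 1) (n + k))

/-- The factor `S_k` of `B_n × S_k`, generated by `s_{n+1}, …, s_{n+k-1}`. -/
def SparF (n k : ℕ) : Subgroup (Equiv.Perm ℤ) := Subgroup.closure (s '' Set.Ico (n + 1) (n + k))

/-- The set `X_{n,k}` of distinguished (minimal length) right coset representatives of
`B_n × S_k` in `B_{n+k}`. -/
def Xnk (n k : ℕ) : Set (Equiv.Perm ℤ) :=
  {x | x ∈ B (n + k) ∧ ∀ u ∈ P n k, len (n + k) x ≤ len (n + k) (u * x)}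

/-- The strict Bruhat order on `B_m`: `x < w` iff `x ≠ w` and some reduced expression of `w`
has a subword whose product is `x`. -/
def bruhatLT (m : ℕ) (x w : Equiv.Perm ℤ) : Prop :=
  x ≠ w ∧ ∃ L : List (Equiv.Perm ℤ), (∀ g ∈ L, g ∈ gens m) ∧ L.prod = w ∧ L.length = len m w ∧
    ∃ L' : List (Equiv.Perm ℤ), L'.Sublist L ∧ L'.prod = x
section Basic

lemma perm_apply_inv_self {α : Type*} (f : Equiv.Perm α) (x : α) : f (f⁻¹ x) = x :=
  f.apply_symm_apply x

lemma perm_inv_apply_self {α : Type*} (f : Equiv.Perm α) (x : α) : f⁻¹ (f x) = x :=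
  f.symm_apply_apply x


lemma t_apply (x : ℤ) : t x = if x = 1 then -1 else if x = -1 then 1 else x := by
  simp only [t, Equiv.swap_apply_def]
  split_ifs <;> omega

lemma s_apply (i : ℕ) (hi : 1 ≤ i) (x : ℤ) :
    s i x = if x = (i:ℤ) then (i:ℤ)+1 else if x = (i:ℤ)+1 then (i:ℤ)
      else if x = -(i:ℤ) then -(i:ℤ)-1 else if x = -(i:ℤ)-1 then -(i:ℤ) else x := by
  simp only [s, Equiv.Perm.mul_apply, Equiv.swap_apply_def]
  split_ifs <;> omega

lemma B_neg {m : ℕ} {v : Equiv.Perm ℤ} (h : v ∈ B m) (x : ℤ) : v (-x) = -v x := h.1 x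

lemma B_fix {m : ℕ} {v : Equiv.Perm ℤ} (h : v ∈ B m) {x : ℤ} (hx : (m:ℤ) < |x|) :
    v x = x := h.2 x hx

lemma B_zero {m : ℕ} {v : Equiv.Perm ℤ} (h : v ∈ B m) : v 0 = 0 := by
  have := h.1 0
  simp at this
  omega

lemma B_abs_le {m : ℕ} {v : Equiv.Perm ℤ} (h : v ∈ B m) {x : ℤ} (hx : |x| ≤ (m:ℤ)) :
    |v x| ≤ (m:ℤ) := by
  by_contra hc
  push_neg at hc
  have h2 : v (v x) = v x := h.2 (v x) hc
  have h3 := v.injective h2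
  rw [h3] at hc
  omega

lemma B_mono {a b : ℕ} (hab : a ≤ b) : B a ≤ B b := by
  rintro v ⟨h1, h2⟩
  exact ⟨h1, fun i hi => h2 i (by omega)⟩

lemma t_mem {m : ℕ} (hm : 1 ≤ m) : t ∈ B m := by
  constructor
  · intro i
    rw [t_apply, t_apply]
    split_ifs <;> omega
  · intro i hi
    rw [t_apply]
    rcases abs_cases i with ⟨e, _⟩ | ⟨e, _⟩ <;> rw [e] at hi <;> split_ifs <;> omega

lemma s_mem {m i : ℕ} (hi : 1 ≤ i) (him : i + 1 ≤ m) : s i ∈ B m := by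
  constructor
  · intro x
    rw [s_apply i hi, s_apply i hi]
    split_ifs <;> omega
  · intro x hx
    rw [s_apply i hi]
    rcases abs_cases x with ⟨e, _⟩ | ⟨e, _⟩ <;> rw [e] at hx <;> split_ifs <;> omega

lemma t_invol : t * t = 1 := by
  simp [t, Equiv.swap_mul_self]

lemma s_invol {i : ℕ} (hi : 1 ≤ i) : s i * s i = 1 := by
  ext x
  simp only [Equiv.Perm.mul_apply, s_apply i hi, Equiv.Perm.one_apply]
  split_ifs <;> omega

lemma gens_mem_B {m : ℕ} (hm : 1 ≤ m) {g : Equiv.Perm ℤ} (hg : g ∈ gens m) : g ∈ B m := by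
  rcases hg with rfl | ⟨i, ⟨hi1, hi2⟩, rfl⟩
  · exact t_mem hm
  · exact s_mem hi1 (by omega)

lemma gens_invol {m : ℕ} {g : Equiv.Perm ℤ} (hg : g ∈ gens m) : g * g = 1 := by
  rcases hg with rfl | ⟨i, ⟨hi1, _⟩, rfl⟩
  · exact t_invol
  · exact s_invol hi1

end Basic
section Stats

/-- Inversion count of `f` on the interval `[lo, hi]`. -/
noncomputable def invI (lo hi : ℤ) (f : ℤ → ℤ) : ℕ :=
  ((Finset.Icc lo hi ×ˢ Finset.Icc lo hi).filter fun p => p.1 < p.2 ∧ f p.2 < f p.1).card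

/-- Sum of absolute values of negative entries of `f` on `[1, m]`. -/
noncomputable def negS (m : ℕ) (f : ℤ → ℤ) : ℕ :=
  ∑ x ∈ Finset.Icc (1:ℤ) (m:ℤ), if f x < 0 then (f x).natAbs else 0

/-- The length statistic for `B m`. -/
noncomputable def Nst (m : ℕ) (f : ℤ → ℤ) : ℕ := invI 1 (m:ℤ) f + negS m f

lemma swap_lt {i p q : ℤ} (hpq : p < q) (hne : ¬(p = i ∧ q = i + 1)) :
    Equiv.swap i (i+1) p < Equiv.swap i (i+1) q := by
  simp only [Equiv.swap_apply_def]
  split_ifs <;> omega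

lemma invI_congr {lo hi : ℤ} {f g : ℤ → ℤ} (h : ∀ x, lo ≤ x → x ≤ hi → f x = g x) :
    invI lo hi f = invI lo hi g := by
  unfold invI
  congr 1
  apply Finset.filter_congr
  rintro ⟨p, q⟩ hpq
  rw [Finset.mem_product, Finset.mem_Icc, Finset.mem_Icc] at hpq
  rw [h p hpq.1.1 hpq.1.2, h q hpq.2.1 hpq.2.2]

lemma negS_congr {m : ℕ} {f g : ℤ → ℤ} (h : ∀ x, 1 ≤ x → x ≤ (m:ℤ) → f x = g x) :
    negS m f = negS m g := by
  unfold negS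
  apply Finset.sum_congr rfl
  intro x hx
  rw [Finset.mem_Icc] at hx
  rw [h x hx.1 hx.2]

lemma invI_swap {lo hi i : ℤ} (hlo : lo ≤ i) (hhi : i + 1 ≤ hi) (f : ℤ → ℤ)
    (hasc : f i < f (i + 1)) :
    invI lo hi (fun x => f (Equiv.swap i (i+1) x)) = invI lo hi f + 1 := by
  classical
  set σ := Equiv.swap i (i+1) with hσ
  have hσσ : ∀ x : ℤ, σ (σ x) = x := fun x => Equiv.swap_apply_self _ _ x
  have hσIcc : ∀ x : ℤ, lo ≤ x → x ≤ hi → lo ≤ σ x ∧ σ x ≤ hi := by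
    intro x h1 h2
    rw [hσ]
    simp only [Equiv.swap_apply_def]
    split_ifs <;> omega
  set S := Finset.Icc lo hi ×ˢ Finset.Icc lo hi with hS
  set A := S.filter (fun p : ℤ × ℤ => p.1 < p.2 ∧ f (σ p.2) < f (σ p.1)) with hA
  set Bf := S.filter (fun p : ℤ × ℤ => p.1 < p.2 ∧ f p.2 < f p.1) with hBf
  have memS : ∀ p : ℤ × ℤ, p ∈ S ↔ (lo ≤ p.1 ∧ p.1 ≤ hi) ∧ lo ≤ p.2 ∧ p.2 ≤ hi := by
    intro p
    rw [hS, Finset.mem_product, Finset.mem_Icc, Finset.mem_Icc]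
  have hx0A : ((i, i+1) : ℤ × ℤ) ∈ A := by
    rw [hA, Finset.mem_filter, memS]
    refine ⟨⟨⟨hlo, by omega⟩, by omega, hhi⟩, by omega, ?_⟩
    have e1 : σ (i+1) = i := by rw [hσ]; exact Equiv.swap_apply_right i (i+1)
    have e2 : σ i = i + 1 := by rw [hσ]; exact Equiv.swap_apply_left i (i+1)
    rw [e1, e2]
    exact hasc
  have hx0B : ((i, i+1) : ℤ × ℤ) ∉ Bf := by
    rw [hBf, Finset.mem_filter]
    rintro ⟨-, -, hc⟩
    have hc' : f (i+1) < f i := hc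
    omega
  have key : (A.erase (i, i+1)).card = Bf.card := by
    apply Finset.card_bij' (fun p _ => (σ p.1, σ p.2)) (fun p _ => (σ p.1, σ p.2))
    · rintro ⟨p, q⟩ hp
      rw [Finset.mem_erase, hA, Finset.mem_filter, memS] at hp
      obtain ⟨hne, ⟨⟨h1, h2⟩, h3, h4⟩, h5, h6⟩ := hp
      have hne' : ¬(p = i ∧ q = i + 1) := by
        intro ⟨e1, e2⟩; exact hne (by rw [e1, e2])
      rw [hBf, Finset.mem_filter, memS]
      exact ⟨⟨hσIcc p h1 h2, hσIcc q h3 h4⟩, swap_lt h5 hne', h6⟩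
    · rintro ⟨p, q⟩ hp
      rw [hBf, Finset.mem_filter, memS] at hp
      obtain ⟨⟨⟨h1, h2⟩, h3, h4⟩, h5, h6⟩ := hp
      have hne' : ¬(p = i ∧ q = i + 1) := by
        rintro ⟨e1, e2⟩
        have h6' : f q < f p := h6
        rw [e1, e2] at h6'
        omega
      rw [Finset.mem_erase, hA, Finset.mem_filter, memS]
      refine ⟨?_, ⟨⟨hσIcc p h1 h2, hσIcc q h3 h4⟩, swap_lt h5 hne', by rw [hσσ, hσσ]; exact h6⟩⟩
      intro hc
      have e1 : σ p = i := congrArg Prod.fst hc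
      have e2 : σ q = i + 1 := congrArg Prod.snd hc
      have : p = σ i := by rw [← e1, hσσ]
      have : p = i + 1 := by rw [this, hσ, Equiv.swap_apply_left]
      have : q = σ (i+1) := by rw [← e2, hσσ]
      have : q = i := by rw [this, hσ, Equiv.swap_apply_right]
      omega
    · rintro ⟨p, q⟩ _
      simp [hσσ]
    · rintro ⟨p, q⟩ _
      simp [hσσ]
  have hAcard : A.card = Bf.card + 1 := by
    rw [← key, Finset.card_erase_of_mem hx0A]
    have : 0 < A.card := Finset.card_pos.2 ⟨_, hx0A⟩
    omega
  exact hAcard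

lemma negS_swap {m : ℕ} {i : ℤ} (h1 : 1 ≤ i) (h2 : i + 1 ≤ (m:ℤ)) (f : ℤ → ℤ) :
    negS m (fun x => f (Equiv.swap i (i+1) x)) = negS m f := by
  unfold negS
  apply Finset.sum_equiv (Equiv.swap i (i+1))
  · intro x
    rw [Finset.mem_Icc, Finset.mem_Icc]
    constructor
    · intro hx
      simp only [Equiv.swap_apply_def]
      split_ifs <;> omega
    · intro hx
      have : Equiv.swap i (i+1) (Equiv.swap i (i+1) x) = x := Equiv.swap_apply_self _ _ _
      revert hx
      rw [← this]
      generalize Equiv.swap i (i+1) x = y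
      simp only [Equiv.swap_apply_def]
      split_ifs <;> omega
  · intro x _
    rfl

end Stats
section Steps

lemma mul_s_apply_pos {v : Equiv.Perm ℤ} {i : ℕ} (hi : 1 ≤ i) {x : ℤ} (hx : 0 < x) :
    (v * s i) x = v (Equiv.swap (i:ℤ) ((i:ℤ)+1) x) := by
  rw [Equiv.Perm.mul_apply]
  congr 1
  rw [s_apply i hi, Equiv.swap_apply_def]
  split_ifs <;> omega

/-- Ascent step for a simple transposition. -/
lemma Nst_mul_s {m : ℕ} {v : Equiv.Perm ℤ} {i : ℕ} (hi : 1 ≤ i)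
    (him : i + 1 ≤ m) (hasc : v (i:ℤ) < v ((i:ℤ)+1)) :
    Nst m (⇑(v * s i)) = Nst m v + 1 := by
  have hc : ∀ x : ℤ, 1 ≤ x → x ≤ (m:ℤ) → (v * s i) x = v (Equiv.swap (i:ℤ) ((i:ℤ)+1) x) :=
    fun x h1 _ => mul_s_apply_pos hi (by omega)
  have e1 : invI 1 (m:ℤ) ⇑(v * s i) = invI 1 (m:ℤ) (fun x => v (Equiv.swap (i:ℤ) ((i:ℤ)+1) x)) :=
    invI_congr hc
  have e2 : negS m ⇑(v * s i) = negS m (fun x => v (Equiv.swap (i:ℤ) ((i:ℤ)+1) x)) :=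
    negS_congr hc
  unfold Nst
  rw [e1, e2, invI_swap (by omega) (by exact_mod_cast (by omega : (i:ℤ) + 1 ≤ (m:ℤ))) _ hasc,
    negS_swap (by omega) (by exact_mod_cast (by omega : (i:ℤ) + 1 ≤ (m:ℤ)))]
  ring

/-- Descent step for a simple transposition. -/
lemma Nst_mul_s_desc {m : ℕ} {v : Equiv.Perm ℤ} {i : ℕ} (hi : 1 ≤ i)
    (him : i + 1 ≤ m) (hdesc : v ((i:ℤ)+1) < v (i:ℤ)) :
    Nst m v = Nst m (⇑(v * s i)) + 1 := by
  have h1 : (v * s i) (i:ℤ) = v ((i:ℤ)+1) := by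
    rw [Equiv.Perm.mul_apply, s_apply i hi]; split_ifs <;> omega
  have h2 : (v * s i) ((i:ℤ)+1) = v (i:ℤ) := by
    rw [Equiv.Perm.mul_apply, s_apply i hi]
    split_ifs <;> first | rfl | omega
  have := Nst_mul_s (v := v * s i) hi him (by rw [h1, h2]; exact hdesc)
  rw [mul_assoc, s_invol hi, mul_one] at this
  omega

lemma mul_t_apply {v : Equiv.Perm ℤ} {x : ℤ} :
    (v * t) x = if x = 1 then v (-1) else if x = -1 then v 1 else v x := by
  rw [Equiv.Perm.mul_apply, t_apply]
  split_ifs <;> rfl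

lemma Icc_split (m : ℕ) (hm : 1 ≤ m) :
    Finset.Icc (1:ℤ) (m:ℤ) = insert 1 (Finset.Icc (2:ℤ) (m:ℤ)) := by
  ext x
  simp only [Finset.mem_Icc, Finset.mem_insert]
  omega

lemma negS_split {m : ℕ} (hm : 1 ≤ m) (f : ℤ → ℤ) :
    negS m f = (if f 1 < 0 then (f 1).natAbs else 0)
      + ∑ x ∈ Finset.Icc (2:ℤ) (m:ℤ), (if f x < 0 then (f x).natAbs else 0) := by
  unfold negS
  rw [Icc_split m hm, Finset.sum_insert (by simp)]

lemma invI_split {m : ℕ} (hm : 1 ≤ m) (f : ℤ → ℤ) :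
    invI 1 (m:ℤ) f = ((Finset.Icc (2:ℤ) (m:ℤ)).filter (fun q => f q < f 1)).card
      + invI 2 (m:ℤ) f := by
  classical
  unfold invI
  rw [← Finset.card_filter_add_card_filter_not
    (p := fun p : ℤ × ℤ => p.1 = 1) (s := (Finset.Icc 1 (m:ℤ) ×ˢ Finset.Icc 1 (m:ℤ)).filter
      fun p => p.1 < p.2 ∧ f p.2 < f p.1)]
  congr 1
  · rw [Finset.filter_filter]
    refine Finset.card_bij' (fun p _ => p.2) (fun q _ => (1, q)) ?_ ?_ ?_ ?_
    · rintro ⟨p, q⟩ hp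
      simp only [Finset.mem_filter, Finset.mem_product, Finset.mem_Icc] at hp ⊢
      obtain ⟨⟨⟨_, _⟩, _, _⟩, ⟨hlt, hf⟩, he⟩ := hp
      subst he
      exact ⟨⟨by omega, by omega⟩, hf⟩
    · rintro q hq
      simp only [Finset.mem_filter, Finset.mem_Icc] at hq
      simp only [Finset.mem_filter, Finset.mem_product, Finset.mem_Icc]
      exact ⟨⟨⟨by omega, by omega⟩, by omega, by omega⟩, ⟨by omega, hq.2⟩, by trivial⟩
    · rintro ⟨p, q⟩ hp
      simp only [Finset.mem_filter] at hp
      obtain ⟨-, -, he⟩ := hp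
      have he' : p = 1 := he
      show ((1 : ℤ), q) = (p, q)
      rw [he']
    · rintro q _
      rfl
  · rw [Finset.filter_filter]
    congr 1
    ext ⟨p, q⟩
    simp only [Finset.mem_filter, Finset.mem_product, Finset.mem_Icc]
    constructor
    · rintro ⟨⟨⟨_, _⟩, _, _⟩, ⟨hlt, hf⟩, hne⟩
      exact ⟨⟨⟨by omega, by omega⟩, by omega, by omega⟩, hlt, hf⟩
    · rintro ⟨⟨⟨_, _⟩, _, _⟩, hlt, hf⟩
      exact ⟨⟨⟨by omega, by omega⟩, by omega, by omega⟩, ⟨hlt, hf⟩, by omega⟩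

/-- Ascent step for `t`. -/
lemma Nst_mul_t {m : ℕ} {v : Equiv.Perm ℤ} (hv : v ∈ B m) (hm : 1 ≤ m) (hpos : 0 < v 1) :
    Nst m (⇑(v * t)) = Nst m v + 1 := by
  classical
  set a := v 1 with ha
  have hvn1 : v (-1) = -a := by rw [ha, ← B_neg hv 1]
  have habs : a ≤ (m:ℤ) := by
    have := B_abs_le hv (x := 1) (by simp; omega)
    rcases abs_cases (v 1) with ⟨e, _⟩ | ⟨e, _⟩ <;> omega
  have hvt1 : (v * t) 1 = -a := by rw [mul_t_apply]; simp [hvn1]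
  have hvtx : ∀ x : ℤ, 2 ≤ x → (v * t) x = v x := by
    intro x hx
    rw [mul_t_apply]
    split_ifs <;> first | omega | rfl
  -- negS
  have hnegS : negS m ⇑(v * t) = negS m v + a.natAbs := by
    rw [negS_split hm, negS_split hm]
    have e1 : ∑ x ∈ Finset.Icc (2:ℤ) (m:ℤ), (if (v * t) x < 0 then ((v * t) x).natAbs else 0)
        = ∑ x ∈ Finset.Icc (2:ℤ) (m:ℤ), (if v x < 0 then (v x).natAbs else 0) := by
      apply Finset.sum_congr rfl
      intro x hx
      rw [Finset.mem_Icc] at hx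
      rw [hvtx x hx.1]
    rw [e1, hvt1]
    have h1 : (if -a < 0 then (-a).natAbs else 0) = a.natAbs := by
      rw [if_pos (by omega)]; simp
    have h2 : (if a < 0 then a.natAbs else 0) = 0 := by rw [if_neg (by omega)]
    rw [h1, ← ha, h2]
    omega
  -- invI
  set C1 := (Finset.Icc (2:ℤ) (m:ℤ)).filter (fun q => v q < -a) with hC1
  set C2 := (Finset.Icc (2:ℤ) (m:ℤ)).filter (fun q => -a < v q ∧ v q < a) with hC2
  have hinv2 : invI 2 (m:ℤ) ⇑(v * t) = invI 2 (m:ℤ) v :=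
    invI_congr (fun x h1 _ => hvtx x h1)
  have hCv : (Finset.Icc (2:ℤ) (m:ℤ)).filter (fun q => v q < v 1) = C1 ∪ C2 := by
    ext q
    simp only [hC1, hC2, Finset.mem_union, Finset.mem_filter, Finset.mem_Icc]
    constructor
    · rintro ⟨⟨hq1, hq2⟩, hq3⟩
      have hqne : v q ≠ -a := by
        intro he
        have : q = -1 := v.injective (by rw [he, hvn1])
        omega
      rw [← ha] at hq3
      rcases lt_or_gt_of_ne hqne with h | h
      · exact Or.inl ⟨⟨hq1, hq2⟩, h⟩
      · exact Or.inr ⟨⟨hq1, hq2⟩, h, hq3⟩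
    · rintro (⟨⟨hq1, hq2⟩, hq3⟩ | ⟨⟨hq1, hq2⟩, hq3, hq4⟩) <;>
        exact ⟨⟨by omega, by omega⟩, by omega⟩
  have hCvt : (Finset.Icc (2:ℤ) (m:ℤ)).filter (fun q => (v * t) q < (v * t) 1) = C1 := by
    rw [hC1]
    apply Finset.filter_congr
    intro q hq
    rw [Finset.mem_Icc] at hq
    rw [hvtx q hq.1, hvt1]
  have hdisj : Disjoint C1 C2 := by
    rw [Finset.disjoint_filter]
    rintro q _ h1 ⟨h2, _⟩
    omega
  have hC2card : C2.card = (a - 1).toNat := by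
    have : (a - 1).toNat = (Finset.Icc (1:ℤ) (a-1)).card := by
      rw [Int.card_Icc]
      congr 1
      omega
    rw [this]
    refine Finset.card_bij' (fun q _ => |v q|) (fun u _ => |v⁻¹ u|) ?_ ?_ ?_ ?_
    · rintro q hq
      rw [hC2, Finset.mem_filter, Finset.mem_Icc] at hq
      obtain ⟨⟨hq1, _⟩, h2, h3⟩ := hq
      have hq0 : v q ≠ 0 := by
        intro he
        have : q = 0 := v.injective (by rw [he, B_zero hv])
        omega
      show |v q| ∈ Finset.Icc (1:ℤ) (a - 1)
      rw [Finset.mem_Icc]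
      rcases abs_cases (v q) with ⟨e, _⟩ | ⟨e, _⟩ <;> rw [e] <;> omega
    · rintro u hu
      rw [Finset.mem_Icc] at hu
      obtain ⟨hu1, hu2⟩ := hu
      have hvinv : v⁻¹ ∈ B m := (B m).inv_mem hv
      have hz : |v⁻¹ u| ≤ (m:ℤ) := B_abs_le hvinv (by rcases abs_cases u with ⟨e,_⟩|⟨e,_⟩ <;> omega)
      have hz0 : v⁻¹ u ≠ 0 := by
        intro he
        have : u = 0 := by rw [← perm_apply_inv_self v u, he, B_zero hv]
        omega
      have hz1 : v⁻¹ u ≠ 1 := by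
        intro he
        have : u = a := by rw [← perm_apply_inv_self v u, he, ha]
        omega
      have hzn1 : v⁻¹ u ≠ -1 := by
        intro he
        have : u = -a := by rw [← perm_apply_inv_self v u, he, hvn1]
        omega
      show |v⁻¹ u| ∈ C2
      rw [hC2, Finset.mem_filter, Finset.mem_Icc]
      rcases abs_cases (v⁻¹ u) with ⟨e, he⟩ | ⟨e, he⟩ <;> rw [e]
      · refine ⟨⟨by omega, by omega⟩, ?_⟩
        rw [perm_apply_inv_self]
        omega
      · refine ⟨⟨by omega, by omega⟩, ?_⟩
        rw [B_neg hv, perm_apply_inv_self]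
        omega
    · rintro q hq
      rw [hC2, Finset.mem_filter, Finset.mem_Icc] at hq
      obtain ⟨⟨hq1, _⟩, _, _⟩ := hq
      show abs (v⁻¹ (abs (v q))) = q
      rcases abs_cases (v q) with ⟨e, he⟩ | ⟨e, he⟩ <;> rw [e]
      · rw [perm_inv_apply_self]
        exact abs_of_nonneg (by omega)
      · rw [← B_neg hv, perm_inv_apply_self, abs_neg]
        exact abs_of_nonneg (by omega)
    · rintro u hu
      rw [Finset.mem_Icc] at hu
      show abs (v (abs (v⁻¹ u))) = u
      rcases abs_cases (v⁻¹ u) with ⟨e, he⟩ | ⟨e, he⟩ <;> rw [e]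
      · rw [perm_apply_inv_self]
        exact abs_of_nonneg (by omega)
      · rw [B_neg hv, perm_apply_inv_self, abs_neg]
        exact abs_of_nonneg (by omega)
  have hinvI : invI 1 (m:ℤ) v = invI 1 (m:ℤ) ⇑(v * t) + (a - 1).toNat := by
    rw [invI_split hm, invI_split hm, hCv, hCvt, hinv2,
      Finset.card_union_of_disjoint hdisj, hC2card]
    omega
  have hnatAbs : a.natAbs = (a - 1).toNat + 1 := by omega
  unfold Nst
  omega

/-- Descent step for `t`. -/
lemma Nst_mul_t_desc {m : ℕ} {v : Equiv.Perm ℤ} (hv : v ∈ B m) (hm : 1 ≤ m) (hneg : v 1 < 0) :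
    Nst m v = Nst m (⇑(v * t)) + 1 := by
  have h1 : (v * t) 1 = -v 1 := by rw [mul_t_apply]; simp [← B_neg hv 1]
  have := Nst_mul_t (v := v * t) ((B m).mul_mem hv (t_mem hm)) hm (by rw [h1]; omega)
  rw [mul_assoc, t_invol, mul_one] at this
  omega

end Steps
section LenEq

lemma Nst_one (m : ℕ) : Nst m ⇑(1 : Equiv.Perm ℤ) = 0 := by
  unfold Nst invI negS
  rw [Finset.filter_false_of_mem, Finset.card_empty]
  · have hz : ∀ x ∈ Finset.Icc (1:ℤ) (m:ℤ),
        (if (1 : Equiv.Perm ℤ) x < 0 then ((1 : Equiv.Perm ℤ) x).natAbs else 0) = 0 := by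
      intro x hx
      rw [Finset.mem_Icc] at hx
      simp only [Equiv.Perm.one_apply]
      exact if_neg (show ¬ x < 0 by omega)
    rw [Finset.sum_congr rfl hz, Finset.sum_const_zero]
    rfl
  · rintro ⟨p, q⟩ _
    simp only [Equiv.Perm.one_apply]
    omega

lemma Nst_id (m : ℕ) : Nst m (id : ℤ → ℤ) = 0 := by
  rw [← Equiv.Perm.coe_one]
  exact Nst_one m

lemma v_one_ne_zero {m : ℕ} {v : Equiv.Perm ℤ} (hv : v ∈ B m) : v 1 ≠ 0 := by
  intro he
  have : (1 : ℤ) = 0 := v.injective (by rw [he, B_zero hv])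
  omega

lemma Nst_step {m : ℕ} {v : Equiv.Perm ℤ} (hv : v ∈ B m) (hm : 1 ≤ m)
    {g : Equiv.Perm ℤ} (hg : g ∈ gens m) :
    Nst m ⇑(v * g) = Nst m ⇑v + 1 ∨ Nst m ⇑v = Nst m ⇑(v * g) + 1 := by
  rcases hg with rfl | ⟨i, ⟨hi1, hi2⟩, rfl⟩
  · have h0 := v_one_ne_zero hv
    rcases lt_or_gt_of_ne h0 with h | h
    · exact Or.inr (Nst_mul_t_desc hv hm h)
    · exact Or.inl (Nst_mul_t hv hm h)
  · have hne : v (i:ℤ) ≠ v ((i:ℤ)+1) := fun he => by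
      have := v.injective he
      omega
    rcases lt_or_gt_of_ne hne with h | h
    · exact Or.inl (Nst_mul_s hi1 (by omega) h)
    · exact Or.inr (Nst_mul_s_desc hi1 (by omega) h)

lemma word_prod_mem {m : ℕ} (hm : 1 ≤ m) {L : List (Equiv.Perm ℤ)}
    (hg : ∀ g ∈ L, g ∈ gens m) : L.prod ∈ B m := by
  induction L with
  | nil => exact (B m).one_mem
  | cons g L ih =>
      rw [List.prod_cons]
      exact (B m).mul_mem (gens_mem_B hm (hg g (List.mem_cons_self))) (ih fun x hx => hg x (List.mem_cons_of_mem _ hx))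

lemma Nst_le_length {m : ℕ} (hm : 1 ≤ m) {L : List (Equiv.Perm ℤ)}
    (hg : ∀ g ∈ L, g ∈ gens m) : Nst m ⇑L.prod ≤ L.length := by
  induction L using List.reverseRecOn with
  | nil => simp [Nst_one, Nst_id]
  | append_singleton L g ih =>
      have hg' : ∀ x ∈ L, x ∈ gens m := fun x hx => hg x (List.mem_append.mpr (Or.inl hx))
      have hmem : L.prod ∈ B m := word_prod_mem hm hg'
      have hstep := Nst_step hmem hm (hg g (by simp))
      rw [List.prod_append, List.prod_singleton] at *
      rw [List.length_append, List.length_singleton]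
      have := ih hg'
      omega

lemma mono_of_adjacent {f : ℤ → ℤ} {lo hi : ℤ}
    (h : ∀ x, lo ≤ x → x + 1 ≤ hi → f x < f (x + 1)) :
    ∀ p q, lo ≤ p → q ≤ hi → p < q → f p < f q := by
  have key : ∀ d : ℕ, ∀ p, lo ≤ p → p + (d:ℤ) + 1 ≤ hi → f p < f (p + d + 1) := by
    intro d
    induction d with
    | zero => intro p hp hq; simpa using h p hp (by push_cast at hq ⊢; omega)
    | succ d ih =>
        intro p hp hq
        have h1 := ih p hp (by push_cast at hq ⊢; omega)
        have h2 := h (p + d + 1) (by omega) (by push_cast at hq ⊢; omega)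
        have : p + ((d:ℤ)+1) + 1 = (p + d + 1) + 1 := by ring
        push_cast
        rw [this]
        exact lt_trans h1 h2
  intro p q hp hq hpq
  have hd : q = p + ((q - p - 1).toNat : ℤ) + 1 := by omega
  rw [hd]
  exact key _ p hp (by omega)

lemma incr_id {f : ℤ → ℤ} {lo hi : ℤ}
    (hmaps : ∀ x, lo ≤ x → x ≤ hi → lo ≤ f x ∧ f x ≤ hi)
    (hmono : ∀ p q, lo ≤ p → q ≤ hi → p < q → f p < f q) :
    ∀ x, lo ≤ x → x ≤ hi → f x = x := by
  have up : ∀ d : ℕ, ∀ x, lo ≤ x → x ≤ hi → x = lo + d → x ≤ f x := by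
    intro d
    induction d with
    | zero => intro x h1 h2 h3; have := hmaps x h1 h2; omega
    | succ d ih =>
        intro x h1 h2 h3
        have h4 := ih (x - 1) (by push_cast at h3; omega) (by omega) (by push_cast at h3 ⊢; omega)
        have h5 := hmono (x-1) x (by omega) h2 (by omega)
        omega
  have down : ∀ d : ℕ, ∀ x, lo ≤ x → x ≤ hi → x = hi - d → f x ≤ x := by
    intro d
    induction d with
    | zero => intro x h1 h2 h3; have := hmaps x h1 h2; omega
    | succ d ih =>
        intro x h1 h2 h3
        have h4 := ih (x + 1) (by omega) (by push_cast at h3; omega) (by push_cast at h3 ⊢; omega)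
        have h5 := hmono x (x+1) h1 (by push_cast at h3; omega) (by omega)
        omega
  intro x h1 h2
  have := up (x - lo).toNat x h1 h2 (by omega)
  have := down (hi - x).toNat x h1 h2 (by omega)
  omega

lemma eq_one_of_fix_window {m : ℕ} {v : Equiv.Perm ℤ} (hv : v ∈ B m)
    (h : ∀ x : ℤ, 1 ≤ x → x ≤ (m:ℤ) → v x = x) : v = 1 := by
  ext z
  rcases lt_trichotomy z 0 with hz | hz | hz
  · by_cases hzm : (m:ℤ) < |z|
    · rw [B_fix hv hzm]; rfl
    · have : v (-z) = -z := h (-z) (by omega) (by rcases abs_cases z with ⟨e,_⟩|⟨e,_⟩ <;> omega)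
      have := B_neg hv (-z)
      simp only [neg_neg] at this
      rw [this]
      simp only [Equiv.Perm.one_apply]
      omega
  · rw [hz, B_zero hv]; rfl
  · by_cases hzm : (m:ℤ) < |z|
    · rw [B_fix hv hzm]; rfl
    · rw [h z (by omega) (by rcases abs_cases z with ⟨e,_⟩|⟨e,_⟩ <;> omega)]; rfl

lemma exists_descent {m : ℕ} {v : Equiv.Perm ℤ} (hv : v ∈ B m) (hm : 1 ≤ m) (hne : v ≠ 1) :
    ∃ g ∈ gens m, (v * g ∈ B m) ∧ Nst m ⇑(v * g) + 1 = Nst m ⇑v := by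
  by_cases hd : ∃ i : ℕ, 1 ≤ i ∧ i + 1 ≤ m ∧ v ((i:ℤ)+1) < v (i:ℤ)
  · obtain ⟨i, hi1, hi2, hdesc⟩ := hd
    exact ⟨s i, Or.inr ⟨i, ⟨hi1, by omega⟩, rfl⟩,
      (B m).mul_mem hv (s_mem hi1 hi2), (Nst_mul_s_desc hi1 hi2 hdesc).symm⟩
  · push_neg at hd
    rcases lt_or_gt_of_ne (v_one_ne_zero hv) with h | h
    · exact ⟨t, Or.inl rfl, (B m).mul_mem hv (t_mem hm),
        (Nst_mul_t_desc hv hm h).symm⟩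
    · exfalso
      apply hne
      apply eq_one_of_fix_window hv
      have hadj : ∀ x : ℤ, 1 ≤ x → x + 1 ≤ (m:ℤ) → v x < v (x+1) := by
        intro x h1 h2
        have h3 := hd x.toNat (by omega) (by omega)
        have hx : ((x.toNat : ℤ)) = x := by omega
        rw [hx] at h3
        rcases lt_or_eq_of_le h3 with h4 | h4
        · exact h4
        · exact absurd (v.injective h4) (by omega)
      have hmono := mono_of_adjacent (lo := 1) (hi := (m:ℤ)) hadj
      apply incr_id _ hmono
      intro x h1 h2
      have habs := B_abs_le hv (x := x) (by rcases abs_cases x with ⟨e,_⟩|⟨e,_⟩ <;> omega)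
      have hpos : 0 < v x := by
        rcases lt_or_eq_of_le h1 with h3 | h3
        · exact lt_trans h (hmono 1 x le_rfl h2 h3)
        · rw [← h3]; exact h
      rcases abs_cases (v x) with ⟨e,_⟩|⟨e,_⟩ <;> omega

lemma exists_min_word {m : ℕ} (hm : 1 ≤ m) :
    ∀ N : ℕ, ∀ v : Equiv.Perm ℤ, v ∈ B m → Nst m ⇑v = N →
      ∃ L : List (Equiv.Perm ℤ), (∀ g ∈ L, g ∈ gens m) ∧ L.prod = v ∧ L.length = Nst m ⇑v := by
  intro N
  induction N using Nat.strong_induction_on with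
  | _ N ih =>
    intro v hv hN
    by_cases hne : v = 1
    · subst hne
      exact ⟨[], by simp, by simp, by simp [Nst_one, Nst_id]⟩
    · obtain ⟨g, hg, hmem, hstep⟩ := exists_descent hv hm hne
      obtain ⟨L, hL1, hL2, hL3⟩ := ih (Nst m ⇑(v * g)) (by omega) (v * g) hmem rfl
      refine ⟨L ++ [g], ?_, ?_, ?_⟩
      · intro x hx
        rcases List.mem_append.mp hx with h | h
        · exact hL1 x h
        · rw [List.mem_singleton] at h; rw [h]; exact hg
      · rw [List.prod_append, List.prod_singleton, hL2, mul_assoc, gens_invol hg, mul_one]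
      · rw [List.length_append, List.length_singleton, hL3]
        omega

theorem len_eq_Nst {m : ℕ} (hm : 1 ≤ m) {v : Equiv.Perm ℤ} (hv : v ∈ B m) :
    len m v = Nst m ⇑v := by
  obtain ⟨L, hL1, hL2, hL3⟩ := exists_min_word hm (Nst m ⇑v) v hv rfl
  apply le_antisymm
  · exact Nat.sInf_le ⟨L, hL1, hL2, hL3⟩
  · have hnonempty : {l | ∃ L : List (Equiv.Perm ℤ), (∀ g ∈ L, g ∈ gens m) ∧ L.prod = v ∧ L.length = l}.Nonempty :=
      ⟨Nst m ⇑v, L, hL1, hL2, hL3⟩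
    obtain ⟨L', hL1', hL2', hL3'⟩ := Nat.sInf_mem hnonempty
    have h4 : Nst m ⇑v ≤ L'.length := by
      rw [← hL2']
      exact Nst_le_length hm hL1'
    have h5 : L'.length = len m v := hL3'
    omega

lemma len_le_of_word {m : ℕ} {v : Equiv.Perm ℤ} {L : List (Equiv.Perm ℤ)}
    (hg : ∀ g ∈ L, g ∈ gens m) (hp : L.prod = v) : len m v ≤ L.length :=
  Nat.sInf_le ⟨L, hg, hp, rfl⟩

lemma exists_word_len {m : ℕ} (hm : 1 ≤ m) {v : Equiv.Perm ℤ} (hv : v ∈ B m) :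
    ∃ L : List (Equiv.Perm ℤ), (∀ g ∈ L, g ∈ gens m) ∧ L.prod = v ∧ L.length = len m v := by
  obtain ⟨L, h1, h2, h3⟩ := exists_min_word hm (Nst m ⇑v) v hv rfl
  exact ⟨L, h1, h2, by rw [h3, len_eq_Nst hm hv]⟩

lemma len_mul_s {m : ℕ} {v : Equiv.Perm ℤ} (hv : v ∈ B m) {i : ℕ} (hi : 1 ≤ i)
    (him : i + 1 ≤ m) (hasc : v (i:ℤ) < v ((i:ℤ)+1)) :
    len m (v * s i) = len m v + 1 := by
  rw [len_eq_Nst (by omega) ((B m).mul_mem hv (s_mem hi him)), len_eq_Nst (by omega) hv,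
    Nst_mul_s hi him hasc]

lemma len_mul_s_desc {m : ℕ} {v : Equiv.Perm ℤ} (hv : v ∈ B m) {i : ℕ} (hi : 1 ≤ i)
    (him : i + 1 ≤ m) (hdesc : v ((i:ℤ)+1) < v (i:ℤ)) :
    len m v = len m (v * s i) + 1 := by
  rw [len_eq_Nst (by omega) ((B m).mul_mem hv (s_mem hi him)), len_eq_Nst (by omega) hv,
    Nst_mul_s_desc hi him hdesc]

lemma len_mul_t {m : ℕ} {v : Equiv.Perm ℤ} (hv : v ∈ B m) (hm : 1 ≤ m) (hpos : 0 < v 1) :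
    len m (v * t) = len m v + 1 := by
  rw [len_eq_Nst hm ((B m).mul_mem hv (t_mem hm)), len_eq_Nst hm hv, Nst_mul_t hv hm hpos]

lemma prod_reverse_eq_inv {L : List (Equiv.Perm ℤ)} (h : ∀ g ∈ L, g * g = 1) :
    L.reverse.prod = L.prod⁻¹ := by
  induction L with
  | nil => simp
  | cons g L ih =>
      rw [List.reverse_cons, List.prod_append, List.prod_singleton, List.prod_cons,
        mul_inv_rev, ih (fun x hx => h x (List.mem_cons_of_mem _ hx))]
      congr 1
      exact (inv_eq_of_mul_eq_one_right (h g (List.mem_cons_self))).symm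

lemma len_inv {m : ℕ} (hm : 1 ≤ m) {v : Equiv.Perm ℤ} (hv : v ∈ B m) :
    len m v⁻¹ = len m v := by
  have key : ∀ u : Equiv.Perm ℤ, u ∈ B m → len m u⁻¹ ≤ len m u := by
    intro u hu
    obtain ⟨L, h1, h2, h3⟩ := exists_word_len hm hu
    have := len_le_of_word (L := L.reverse) (fun g hg => h1 g (List.mem_reverse.mp hg))
      (by rw [prod_reverse_eq_inv (fun g hg => gens_invol (h1 g hg)), h2])
    rw [List.length_reverse, h3] at this
    exact this
  have h1 := key v hv
  have h2 := key v⁻¹ ((B m).inv_mem hv)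
  rw [inv_inv] at h2
  omega

lemma len_one (m : ℕ) : len m 1 = 0 := by
  simpa using len_le_of_word (m := m) (v := (1 : Equiv.Perm ℤ)) (L := []) (by simp) List.prod_nil

end LenEq
section CElt

lemma cElt_zero (n : ℕ) : cElt n 0 = 1 := by simp [cElt]

lemma cElt_succ (n k : ℕ) : cElt n (k+1) = cElt n k * s (n+1+k) := by
  unfold cElt
  rw [List.range_succ, List.map_append, List.prod_append]
  simp

lemma cElt_cons (n k : ℕ) : cElt n (k+1) = s (n+1) * cElt (n+1) k := by
  unfold cElt
  rw [List.range_succ_eq_map, List.map_cons, List.prod_cons, List.map_map]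
  congr 1
  refine congrArg List.prod (List.map_congr_left ?_)
  intro a _
  simp only [Function.comp_apply]
  congr 1
  omega

lemma cElt_mem (n k : ℕ) : cElt n k ∈ B (n+k+1) := by
  apply Subgroup.list_prod_mem
  intro g hg
  rw [List.mem_map] at hg
  obtain ⟨j, hj, rfl⟩ := hg
  rw [List.mem_range] at hj
  exact s_mem (by omega) (by omega)

lemma cElt_apply (n k : ℕ) {x : ℤ} (hx : 0 ≤ x) :
    cElt n k x = if (n:ℤ)+1 ≤ x ∧ x ≤ (n:ℤ)+k then x+1
      else if x = (n:ℤ)+k+1 then (n:ℤ)+1 else x := by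
  induction k generalizing x with
  | zero =>
      rw [cElt_zero]
      simp only [Equiv.Perm.one_apply]
      split_ifs <;> omega
  | succ k ih =>
      rw [cElt_succ, Equiv.Perm.mul_apply, s_apply (n+1+k) (by omega)]
      by_cases h1 : x = ((n:ℕ):ℤ)+1+k
      · rw [if_pos (by push_cast; omega)]
        rw [ih (by omega)]
        push_cast
        split_ifs <;> omega
      · rw [if_neg (by push_cast; omega)]
        by_cases h2 : x = ((n:ℕ):ℤ)+1+k+1
        · rw [if_pos (by push_cast; omega)]
          rw [ih (by omega)]
          push_cast
          split_ifs <;> omega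
        · rw [if_neg (by push_cast; omega), if_neg (by push_cast; omega),
            if_neg (by push_cast; omega)]
          rw [ih hx]
          push_cast
          split_ifs <;> omega

lemma cElt_apply_low {n k : ℕ} {x : ℤ} (h0 : 0 ≤ x) (h : x ≤ (n:ℤ)) : cElt n k x = x := by
  rw [cElt_apply n k h0]
  split_ifs <;> omega

lemma cElt_apply_mid {n k : ℕ} {x : ℤ} (h1 : (n:ℤ)+1 ≤ x) (h2 : x ≤ (n:ℤ)+k) :
    cElt n k x = x + 1 := by
  rw [cElt_apply n k (by omega)]
  rw [if_pos ⟨h1, h2⟩]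

lemma cElt_apply_top (n k : ℕ) : cElt n k ((n:ℤ)+k+1) = (n:ℤ)+1 := by
  rw [cElt_apply n k (by omega)]
  split_ifs <;> omega

lemma cElt_apply_high {n k : ℕ} {x : ℤ} (h : (n:ℤ)+k+2 ≤ x) : cElt n k x = x := by
  rw [cElt_apply n k (by omega)]
  split_ifs <;> omega

lemma cElt_inv_apply_top (n k : ℕ) : (cElt n k)⁻¹ ((n:ℤ)+1) = (n:ℤ)+k+1 := by
  rw [← cElt_apply_top n k, perm_inv_apply_self]

lemma cElt_inv_apply_mid {n k : ℕ} {x : ℤ} (h1 : (n:ℤ)+2 ≤ x) (h2 : x ≤ (n:ℤ)+k+1) :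
    (cElt n k)⁻¹ x = x - 1 := by
  have h : cElt n k (x - 1) = x := by
    rw [cElt_apply_mid (by omega) (by omega)]
    ring
  nth_rewrite 1 [← h]
  exact perm_inv_apply_self _ _

lemma cElt_inv_apply_low {n k : ℕ} {x : ℤ} (h0 : 0 ≤ x) (h : x ≤ (n:ℤ)) :
    (cElt n k)⁻¹ x = x := by
  have : cElt n k x = x := cElt_apply_low h0 h
  rw [← this, perm_inv_apply_self, this]

lemma cElt_inv_apply_high {n k : ℕ} {x : ℤ} (h : (n:ℤ)+k+2 ≤ x) : (cElt n k)⁻¹ x = x := by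
  have : cElt n k x = x := cElt_apply_high h
  rw [← this, perm_inv_apply_self, this]

lemma cElt_inv_mem (n k : ℕ) : (cElt n k)⁻¹ ∈ B (n+k+1) := (B _).inv_mem (cElt_mem n k)

lemma len_cElt {m n k : ℕ} (hm : n + k + 1 ≤ m) : len m (cElt n k) = k := by
  induction k with
  | zero => rw [cElt_zero, len_one]
  | succ k ih =>
      rw [cElt_succ]
      have hasc : cElt n k (((n+1+k : ℕ) : ℤ)) < cElt n k (((n+1+k : ℕ) : ℤ)+1) := by
        have e1 : ((n+1+k : ℕ) : ℤ) = (n:ℤ)+k+1 := by push_cast; ring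
        rw [e1, show (n:ℤ)+k+1+1 = (n:ℤ)+k+2 by ring, cElt_apply_top,
          cElt_apply_high (by omega)]
        omega
      have hmem' : cElt n k ∈ B m := B_mono (by omega) (cElt_mem n k)
      have hi1 : 1 ≤ n+1+k := by omega
      have hi2 : n+1+k+1 ≤ m := by omega
      have hlen := len_mul_s hmem' hi1 hi2 hasc
      rw [hlen, ih (by omega)]

/-- The list `s (n+k), s (n+k-1), …` of length `j`. -/
def rProd (n k j : ℕ) : Equiv.Perm ℤ := ((List.range j).map (fun a => s (n + k - a))).prod

lemma rProd_zero (n k : ℕ) : rProd n k 0 = 1 := by simp [rProd]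

lemma rProd_succ (n k j : ℕ) : rProd n k (j+1) = rProd n k j * s (n + k - j) := by
  unfold rProd
  rw [List.range_succ, List.map_append, List.prod_append]
  simp

lemma rProd_mem {m n k j : ℕ} (hj : j ≤ k) (hk : 1 ≤ k) (hm : n + k + 1 ≤ m) :
    rProd n k j ∈ B m := by
  apply Subgroup.list_prod_mem
  intro g hg
  rw [List.mem_map] at hg
  obtain ⟨a, ha, rfl⟩ := hg
  rw [List.mem_range] at ha
  exact s_mem (by omega) (by omega)

lemma rProd_top_apply {n k j : ℕ} (hj : j ≤ k) :
    rProd n k j ((n:ℤ)+k+1-j) = (n:ℤ)+k+1 := by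
  induction j with
  | zero => rw [rProd_zero]; simp
  | succ j ih =>
      rw [rProd_succ, Equiv.Perm.mul_apply, s_apply (n+k-j) (by omega)]
      rw [if_pos (by push_cast; omega)]
      have : ((n + k - j : ℕ) : ℤ) + 1 = (n:ℤ)+k+1-j := by omega
      rw [this]
      exact ih (by omega)

lemma rProd_low_apply {n k j : ℕ} (hj : j ≤ k) {x : ℤ} (h0 : 0 ≤ x)
    (hx : x ≤ (n:ℤ)+k-j) : rProd n k j x = x := by
  induction j with
  | zero => rw [rProd_zero]; rfl
  | succ j ih =>
      rw [rProd_succ, Equiv.Perm.mul_apply, s_apply (n+k-j) (by omega)]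
      rw [if_neg (by omega), if_neg (by omega), if_neg (by omega), if_neg (by omega)]
      exact ih (by omega) (by omega)

lemma rProd_eq_cElt_inv (n k : ℕ) : rProd n k k = (cElt n k)⁻¹ := by
  induction k with
  | zero => rw [rProd_zero, cElt_zero]; simp
  | succ k ih =>
      have step : rProd n (k+1) (k+1) = s (n+1+k) * rProd n k k := by
        unfold rProd
        rw [List.range_succ_eq_map, List.map_cons, List.prod_cons, List.map_map]
        congr 1
        · congr 1
          omega
        · refine congrArg List.prod (List.map_congr_left ?_)
          intro a _
          simp only [Function.comp_apply]
          congr 1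
          omega
      rw [step, ih, cElt_succ, mul_inv_rev]
      congr 1
      exact inv_eq_of_mul_eq_one_right (s_invol (by omega)) |>.symm

end CElt
section Gen

lemma finset_surj {f : ℤ → ℤ} (hf : Function.Injective f) (T : Finset ℤ)
    (hmaps : ∀ x ∈ T, f x ∈ T) : ∀ y ∈ T, ∃ x ∈ T, f x = y := by
  classical
  have himg : T.image f = T :=
    Finset.eq_of_subset_of_card_le (Finset.image_subset_iff.mpr hmaps)
      (by rw [Finset.card_image_of_injective _ hf])
  intro y hy
  rw [← himg, Finset.mem_image] at hy
  obtain ⟨x, hx, he⟩ := hy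
  exact ⟨x, hx, he⟩

lemma closure_maps_finset {S : Set (Equiv.Perm ℤ)} {T : Finset ℤ}
    (hS : ∀ g ∈ S, ∀ x ∈ T, g x ∈ T) :
    ∀ u ∈ Subgroup.closure S, ∀ x ∈ T, u x ∈ T := by
  intro u hu
  induction hu using Subgroup.closure_induction with
  | mem g hg => exact hS g hg
  | one => intro x hx; exact hx
  | mul a b _ _ pa pb =>
      intro x hx
      rw [Equiv.Perm.mul_apply]
      exact pa (b x) (pb x hx)
  | inv a _ pa =>
      intro x hx
      obtain ⟨y, hy, he⟩ := finset_surj a.injective T pa x hx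
      rw [← he, perm_inv_apply_self]
      exact hy

lemma mem_closure_gens {m : ℕ} (hm : 1 ≤ m) {v : Equiv.Perm ℤ} (hv : v ∈ B m) :
    v ∈ Subgroup.closure (gens m) := by
  obtain ⟨L, h1, h2, _⟩ := exists_word_len hm hv
  rw [← h2]
  exact Subgroup.list_prod_mem _ (fun g hg => Subgroup.subset_closure (h1 g hg))

lemma B_zero_eq_one {v : Equiv.Perm ℤ} (hv : v ∈ B 0) : v = 1 :=
  eq_one_of_fix_window hv (fun x h1 h2 => by exfalso; omega)

lemma v_abs_le_of_band {b a : ℕ} (hab : a ≤ b) {v : Equiv.Perm ℤ} (hv : v ∈ B b)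
    (hband : ∀ x : ℤ, (a:ℤ) < x → x ≤ (b:ℤ) → ((a:ℤ) < v x ∧ v x ≤ (b:ℤ)))
    {x : ℤ} (hx : |x| ≤ (a:ℤ)) : |v x| ≤ (a:ℤ) := by
  have h1 : |v x| ≤ (b:ℤ) := B_abs_le hv (by omega)
  set T := Finset.Icc ((a:ℤ)+1) (b:ℤ) with hT
  have hmaps : ∀ y ∈ T, v y ∈ T := by
    intro y hy
    rw [hT, Finset.mem_Icc] at *
    have := hband y (by omega) (by omega)
    omega
  by_contra hc
  push_neg at hc
  rcases le_or_gt 0 (v x) with h | h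
  · -- a < v x ≤ b
    obtain ⟨z, hz, he⟩ := finset_surj v.injective T hmaps (v x)
      (by rw [hT, Finset.mem_Icc]; rcases abs_cases (v x) with ⟨e,_⟩|⟨e,_⟩ <;> omega)
    have : z = x := v.injective he
    rw [hT, Finset.mem_Icc] at hz
    rcases abs_cases x with ⟨e,_⟩|⟨e,_⟩ <;> omega
  · -- -b ≤ v x < -a, so v (-x) = -v x ∈ (a, b]
    obtain ⟨z, hz, he⟩ := finset_surj v.injective T hmaps (-(v x))
      (by
        rw [hT, Finset.mem_Icc]
        rcases abs_cases (v x) with ⟨e,_⟩|⟨e,_⟩ <;> omega)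
    have he2 : v z = v (-x) := by rw [he, B_neg hv]
    have : z = -x := v.injective he2
    rw [hT, Finset.mem_Icc] at hz
    rcases abs_cases x with ⟨e,_⟩|⟨e,_⟩ <;> omega

lemma band_inv {b a : ℕ} (hab : a ≤ b) {v : Equiv.Perm ℤ} (hv : v ∈ B b)
    (hband : ∀ x : ℤ, (a:ℤ) < x → x ≤ (b:ℤ) → ((a:ℤ) < v x ∧ v x ≤ (b:ℤ))) :
    ∀ x : ℤ, (a:ℤ) < x → x ≤ (b:ℤ) → ((a:ℤ) < v⁻¹ x ∧ v⁻¹ x ≤ (b:ℤ)) := by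
  set T := Finset.Icc ((a:ℤ)+1) (b:ℤ) with hT
  have hmaps : ∀ y ∈ T, v y ∈ T := by
    intro y hy
    rw [hT, Finset.mem_Icc] at *
    have := hband y (by omega) (by omega)
    omega
  intro x h1 h2
  obtain ⟨z, hz, he⟩ := finset_surj v.injective T hmaps x (by rw [hT, Finset.mem_Icc]; omega)
  rw [← he, perm_inv_apply_self]
  rw [hT, Finset.mem_Icc] at hz
  omega

lemma decomp {a b : ℕ} (hab : a ≤ b) {v : Equiv.Perm ℤ} (hv : v ∈ B b)
    (hband : ∀ x : ℤ, (a:ℤ) < x → x ≤ (b:ℤ) → ((a:ℤ) < v x ∧ v x ≤ (b:ℤ))) :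
    ∃ v₁ v₂ : Equiv.Perm ℤ, v = v₁ * v₂ ∧ v₁ ∈ B a ∧ v₂ ∈ B b ∧
      (∀ x : ℤ, (a:ℤ) < x → x ≤ (b:ℤ) → ((a:ℤ) < v₂ x ∧ v₂ x ≤ (b:ℤ))) ∧
      (∀ x : ℤ, 1 ≤ x → x ≤ (a:ℤ) → v₂ x = x) := by
  classical
  have hbandinv := band_inv hab hv hband
  have habs : ∀ x : ℤ, |x| ≤ (a:ℤ) → |v x| ≤ (a:ℤ) := fun x hx => v_abs_le_of_band hab hv hband hx
  have habsinv : ∀ x : ℤ, |x| ≤ (a:ℤ) → |v⁻¹ x| ≤ (a:ℤ) :=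
    fun x hx => v_abs_le_of_band hab ((B b).inv_mem hv) hbandinv hx
  refine ⟨⟨fun x => if |x| ≤ (a:ℤ) then v x else x, fun x => if |x| ≤ (a:ℤ) then v⁻¹ x else x,
    ?_, ?_⟩, ?_⟩
  · intro x
    by_cases hx : |x| ≤ (a:ℤ)
    · simp only [if_pos hx, if_pos (habs x hx), perm_inv_apply_self]
    · simp only [if_neg hx]
  · intro x
    by_cases hx : |x| ≤ (a:ℤ)
    · simp only [if_pos hx, if_pos (habsinv x hx), perm_apply_inv_self]
    · simp only [if_neg hx]
  · set v₁ : Equiv.Perm ℤ := ⟨fun x => if |x| ≤ (a:ℤ) then v x else x,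
      fun x => if |x| ≤ (a:ℤ) then v⁻¹ x else x, by
      intro x
      by_cases hx : |x| ≤ (a:ℤ)
      · simp only [if_pos hx, if_pos (habs x hx), perm_inv_apply_self]
      · simp only [if_neg hx], by
      intro x
      by_cases hx : |x| ≤ (a:ℤ)
      · simp only [if_pos hx, if_pos (habsinv x hx), perm_apply_inv_self]
      · simp only [if_neg hx]⟩ with hv₁
    have hv₁app : ∀ x : ℤ, v₁ x = if |x| ≤ (a:ℤ) then v x else x := fun x => rfl
    have hv₁invapp : ∀ x : ℤ, v₁⁻¹ x = if |x| ≤ (a:ℤ) then v⁻¹ x else x := fun x => rfl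
    have hv₁B : v₁ ∈ B a := by
      constructor
      · intro x
        rw [hv₁app, hv₁app, abs_neg]
        by_cases hx : |x| ≤ (a:ℤ)
        · rw [if_pos hx, if_pos hx, B_neg hv]
        · rw [if_neg hx, if_neg hx]
      · intro x hx
        rw [hv₁app, if_neg (by omega)]
    refine ⟨v₁⁻¹ * v, ?_, hv₁B, ?_, ?_, ?_⟩
    · rw [← mul_assoc, mul_inv_cancel, one_mul]
    · exact (B b).mul_mem ((B b).inv_mem (B_mono hab hv₁B)) hv
    · intro x h1 h2
      rw [Equiv.Perm.mul_apply, hv₁invapp]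
      have := hband x h1 h2
      rw [if_neg (by rcases abs_cases (v x) with ⟨e,_⟩|⟨e,_⟩ <;> omega)]
      exact this
    · intro x h1 h2
      rw [Equiv.Perm.mul_apply, hv₁invapp,
        if_pos (by rcases abs_cases (v x) with ⟨e,_⟩|⟨e,_⟩ <;> [skip; skip] <;>
          have := habs x (by rcases abs_cases x with ⟨e2,_⟩|⟨e2,_⟩ <;> omega) <;> omega),
        perm_inv_apply_self]

lemma interval_gen {a b : ℕ} :
    ∀ N : ℕ, ∀ v : Equiv.Perm ℤ, v ∈ B b →
      (∀ x : ℤ, (a:ℤ) < x → x ≤ (b:ℤ) → ((a:ℤ) < v x ∧ v x ≤ (b:ℤ))) →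
      (∀ x : ℤ, 1 ≤ x → x ≤ (a:ℤ) → v x = x) →
      invI ((a:ℤ)+1) (b:ℤ) ⇑v = N →
      v ∈ Subgroup.closure (s '' Set.Ico (a+1) b) := by
  intro N
  induction N using Nat.strong_induction_on with
  | _ N ih =>
    intro v hv hband hfix hN
    by_cases hd : ∃ i : ℕ, a + 1 ≤ i ∧ i + 1 ≤ b ∧ v ((i:ℤ)+1) < v (i:ℤ)
    · obtain ⟨i, hi1, hi2, hdesc⟩ := hd
      have hsmem : s i ∈ B b := s_mem (by omega) hi2
      have hsband : ∀ x : ℤ, (a:ℤ) < x → x ≤ (b:ℤ) → ((a:ℤ) < s i x ∧ s i x ≤ (b:ℤ)) := by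
        intro x h1 h2
        rw [s_apply i (by omega)]
        split_ifs <;> omega
      have hsfix : ∀ x : ℤ, 1 ≤ x → x ≤ (a:ℤ) → s i x = x := by
        intro x h1 h2
        rw [s_apply i (by omega)]
        split_ifs <;> omega
      -- inversion count decreases
      have hcong : ∀ x : ℤ, (a:ℤ)+1 ≤ x → x ≤ (b:ℤ) →
          (v * s i) (Equiv.swap (i:ℤ) ((i:ℤ)+1) x) = v x := by
        intro x h1 h2
        rw [mul_s_apply_pos (by omega) (by
          have : 0 < x := by omega
          simp only [Equiv.swap_apply_def]
          split_ifs <;> omega)]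
        rw [Equiv.swap_apply_self]
      have hasc : (v * s i) (i:ℤ) < (v * s i) ((i:ℤ)+1) := by
        have e1 : (v * s i) (i:ℤ) = v ((i:ℤ)+1) := by
          rw [Equiv.Perm.mul_apply, s_apply i (by omega)]
          split_ifs <;> omega
        have e2 : (v * s i) ((i:ℤ)+1) = v (i:ℤ) := by
          rw [Equiv.Perm.mul_apply, s_apply i (by omega)]
          split_ifs <;> first | rfl | omega
        rw [e1, e2]
        exact hdesc
      have hinv : invI ((a:ℤ)+1) (b:ℤ) ⇑v = invI ((a:ℤ)+1) (b:ℤ) ⇑(v * s i) + 1 := by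
        have := invI_swap (lo := (a:ℤ)+1) (hi := (b:ℤ)) (i := (i:ℤ)) (by omega) (by push_cast; omega)
          ⇑(v * s i) hasc
        rw [← this]
        exact invI_congr (fun x h1 h2 => (hcong x h1 h2).symm)
      have hrec := ih (invI ((a:ℤ)+1) (b:ℤ) ⇑(v * s i)) (by omega) (v * s i)
        ((B b).mul_mem hv hsmem)
        (by
          intro x h1 h2
          rw [Equiv.Perm.mul_apply]
          have := hsband x h1 h2
          exact hband _ this.1 this.2)
        (by
          intro x h1 h2
          rw [Equiv.Perm.mul_apply, hsfix x h1 h2]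
          exact hfix x h1 h2)
        rfl
      have : v = (v * s i) * s i := by rw [mul_assoc, s_invol (by omega), mul_one]
      rw [this]
      exact Subgroup.mul_mem _ hrec (Subgroup.subset_closure ⟨i, ⟨hi1, by omega⟩, rfl⟩)
    · push_neg at hd
      have hadj : ∀ x : ℤ, (a:ℤ)+1 ≤ x → x + 1 ≤ (b:ℤ) → v x < v (x+1) := by
        intro x h1 h2
        have h3 := hd x.toNat (by omega) (by omega)
        have hx : ((x.toNat : ℤ)) = x := by omega
        rw [hx] at h3
        rcases lt_or_eq_of_le h3 with h4 | h4
        · exact h4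
        · exact absurd (v.injective h4) (by omega)
      have hmono := mono_of_adjacent (lo := (a:ℤ)+1) (hi := (b:ℤ)) hadj
      have hid : ∀ x : ℤ, (a:ℤ)+1 ≤ x → x ≤ (b:ℤ) → v x = x := by
        apply incr_id _ hmono
        intro x h1 h2
        have := hband x (by omega) h2
        omega
      have : v = 1 := by
        apply eq_one_of_fix_window hv
        intro x h1 h2
        rcases le_or_gt x (a:ℤ) with h | h
        · exact hfix x h1 h
        · exact hid x (by omega) h2
      rw [this]
      exact Subgroup.one_mem _

end Gen
section Uword

lemma canon_word (n k : ℕ) :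
    (List.range k).map (fun j => s (n+1+j)) = (List.range' (n+1) k).map s := by
  rw [List.range'_eq_map_range, List.map_map]
  rfl

lemma uword {m : ℕ} : ∀ k' n' : ℕ, n' + k' + 1 ≤ m →
    ∀ L : List (Equiv.Perm ℤ), (∀ g ∈ L, g ∈ gens m) → L.prod = cElt n' k' →
      L.length = k' → L = (List.range k').map (fun j => s (n'+1+j)) := by
  intro k'
  induction k' with
  | zero =>
      intro n' _ L _ _ hlen
      rw [List.length_eq_zero_iff] at hlen
      rw [hlen]
      simp
  | succ k' ih =>
      intro n' hm L hg hprod hlen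
      match L with
      | [] => simp at hlen
      | g :: L₂ =>
        have hgg : g ∈ gens m := hg g (List.mem_cons_self)
        have hg₂ : ∀ x ∈ L₂, x ∈ gens m := fun x hx => hg x (List.mem_cons_of_mem _ hx)
        rw [List.prod_cons] at hprod
        have hL₂prod : L₂.prod = g * cElt n' (k'+1) := by
          rw [← hprod, ← mul_assoc, gens_invol hgg, one_mul]
        have hL₂len : L₂.length = k' := by
          simp at hlen
          omega
        have hlenle : len m L₂.prod ≤ k' := by
          rw [← hL₂len]
          exact len_le_of_word hg₂ rfl
        have hcinvmem : (cElt n' (k'+1))⁻¹ ∈ B m :=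
          (B m).inv_mem (B_mono (by omega) (cElt_mem n' (k'+1)))
        have hcinvlen : len m (cElt n' (k'+1))⁻¹ = k'+1 := by
          rw [len_inv (by omega) (B_mono (by omega) (cElt_mem n' (k'+1))), len_cElt (by omega)]
        have hlencg : len m L₂.prod = len m ((cElt n' (k'+1))⁻¹ * g) := by
          rw [hL₂prod]
          rw [show (cElt n' (k'+1))⁻¹ * g = (g * cElt n' (k'+1))⁻¹ by
            rw [mul_inv_rev]
            congr 1
            exact (inv_eq_of_mul_eq_one_right (gens_invol hgg)).symm]
          rw [len_inv (by omega)]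
          exact (B m).mul_mem (gens_mem_B (by omega) hgg) (B_mono (by omega) (cElt_mem n' (k'+1)))
        -- identify g
        have hgs : g = s (n'+1) := by
          rcases hgg with rfl | ⟨i, ⟨hi1, hi2⟩, rfl⟩
          · exfalso
            have hpos : 0 < (cElt n' (k'+1))⁻¹ 1 := by
              rcases Nat.eq_zero_or_pos n' with hn | hn
              · subst hn
                have h := cElt_inv_apply_top 0 (k'+1)
                norm_num at h
                rw [Equiv.Perm.inv_def, h]
                positivity
              · rw [cElt_inv_apply_low (by omega) (by exact_mod_cast hn)]
                omega
            have := len_mul_t hcinvmem (by omega) hpos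
            rw [← hlencg] at this
            omega
          · by_cases hi : i = n' + 1
            · rw [hi]
            · exfalso
              have hasc : (cElt n' (k'+1))⁻¹ (i:ℤ) < (cElt n' (k'+1))⁻¹ ((i:ℤ)+1) := by
                rcases lt_trichotomy i n' with h | h | h
                · rw [cElt_inv_apply_low (by omega) (by omega),
                    cElt_inv_apply_low (by omega) (by push_cast; omega)]
                  omega
                · have hi' : (i:ℤ) = (n':ℤ) := by exact_mod_cast h
                  have htop := cElt_inv_apply_top n' (k'+1)
                  rw [cElt_inv_apply_low (by omega) (by omega), hi', htop]
                  push_cast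
                  omega
                · -- i ≥ n'+1, i ≠ n'+1 so i ≥ n'+2
                  rcases le_or_gt ((i:ℤ)+1) ((n':ℤ)+(k'+1)+1) with h2 | h2
                  · rw [cElt_inv_apply_mid (by omega) (by omega),
                      cElt_inv_apply_mid (by omega) (by push_cast at h2 ⊢; omega)]
                    omega
                  · rcases le_or_gt ((i:ℤ)) ((n':ℤ)+(k'+1)+1) with h3 | h3
                    · rw [cElt_inv_apply_mid (by omega) (by omega),
                        cElt_inv_apply_high (by push_cast at h2 ⊢; omega)]
                      omega
                    · rw [cElt_inv_apply_high (by omega),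
                        cElt_inv_apply_high (by push_cast at h2 ⊢; omega)]
                      omega
              have := len_mul_s hcinvmem hi1 (by omega) hasc
              rw [← hlencg] at this
              omega
        subst hgs
        have hL₂c : L₂.prod = cElt (n'+1) k' := by
          rw [hL₂prod, cElt_cons, ← mul_assoc, s_invol (by omega), one_mul]
        have := ih (n'+1) (by omega) L₂ hg₂ hL₂c hL₂len
        rw [List.range_succ_eq_map, List.map_cons, List.map_map, this]
        congr 1
        apply List.map_congr_left
        intro x _
        simp only [Function.comp_apply]
        congr 1
        omega

lemma subword_apply : ∀ c : ℕ, ∀ a : ℕ, 1 ≤ a → ∀ J : List ℕ, J.Sublist (List.range' a c) →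
    ((a:ℤ) ≤ ((J.map s).prod) ((a:ℤ) + c) ∧ ((J.map s).prod) ((a:ℤ)+c) ≤ (a:ℤ)+c) ∧
    (((J.map s).prod) ((a:ℤ)+c) = (a:ℤ) → J = List.range' a c) := by
  intro c
  induction c with
  | zero =>
      intro a ha J hJ
      have : J = [] := List.sublist_nil.mp (by simpa using hJ)
      subst this
      simp
  | succ c ih =>
      intro a ha J hJ
      rw [List.range'_succ] at hJ
      rcases List.sublist_cons_iff.mp hJ with h | ⟨J₂, rfl, hJ₂⟩
      · have hr := ih (a+1) (by omega) J h
        push_cast at hr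
        have e : (a:ℤ) + ((c:ℤ)+1) = ((a:ℤ)+1) + c := by ring
        push_cast
        rw [e]
        constructor
        · constructor
          · omega
          · omega
        · intro he
          exact absurd he (by omega)
      · have hr := ih (a+1) (by omega) J₂ hJ₂
        push_cast at hr
        rw [List.map_cons, List.prod_cons, Equiv.Perm.mul_apply]
        have e : (a:ℤ) + ((c:ℤ)+1) = ((a:ℤ)+1) + c := by ring
        push_cast
        rw [e]
        set z := ((J₂.map s).prod) (((a:ℤ)+1) + c) with hz
        rcases eq_or_lt_of_le hr.1.1 with h1 | h1
        · -- z = a+1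
          have hs : s a (z) = a := by
            rw [s_apply a ha, ← h1]
            split_ifs <;> omega
          rw [hs]
          refine ⟨⟨le_refl _, by omega⟩, fun _ => ?_⟩
          rw [List.range'_succ]
          rw [hr.2 h1.symm]
        · -- z ≥ a+2
          have hs : s a z = z := by
            rw [s_apply a ha]
            split_ifs <;> omega
          rw [hs]
          refine ⟨⟨by omega, by omega⟩, fun he => ?_⟩
          exact absurd he (by omega)

end Uword
section Parab

lemma P_le_B' {n k : ℕ} (hnk : 1 ≤ n + k) : P n k ≤ B (n + k) := by
  apply (Subgroup.closure_le _).mpr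
  rintro g ((hg | hg) | hg)
  · rcases Nat.eq_zero_or_pos n with hn | hn
    · rw [if_pos hn] at hg
      exact absurd hg (Set.notMem_empty g)
    · rw [if_neg (by omega)] at hg
      rw [Set.mem_singleton_iff] at hg
      subst hg
      exact t_mem hnk
  · obtain ⟨i, ⟨hi1, hi2⟩, rfl⟩ := hg
    exact s_mem hi1 (by omega)
  · obtain ⟨i, ⟨hi1, hi2⟩, rfl⟩ := hg
    exact s_mem (by omega) (by omega)

lemma P_band {n k : ℕ} {u : Equiv.Perm ℤ} (hu : u ∈ P n k) :
    ∀ x : ℤ, (n:ℤ)+1 ≤ x → x ≤ (n:ℤ)+(k:ℤ) → ((n:ℤ)+1 ≤ u x ∧ u x ≤ (n:ℤ)+(k:ℤ)) := by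
  have key := closure_maps_finset (T := Finset.Icc ((n:ℤ)+1) ((n:ℤ)+(k:ℤ)))
    (S := ((if n = 0 then (∅ : Set (Equiv.Perm ℤ)) else {t}) ∪ s '' Set.Ico 1 n ∪
      s '' Set.Ico (n + 1) (n + k))) ?_ u hu
  · intro x h1 h2
    have := key x (Finset.mem_Icc.mpr ⟨h1, h2⟩)
    rw [Finset.mem_Icc] at this
    exact this
  · rintro g ((hg | hg) | hg) x hx <;> rw [Finset.mem_Icc] at hx ⊢
    · rcases Nat.eq_zero_or_pos n with hn | hn
      · rw [if_pos hn] at hg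
        exact absurd hg (Set.notMem_empty g)
      · rw [if_neg (by omega)] at hg
        rw [Set.mem_singleton_iff] at hg
        subst hg
        rw [t_apply]
        split_ifs <;> omega
    · obtain ⟨i, ⟨hi1, hi2⟩, rfl⟩ := hg
      rw [s_apply i hi1]
      split_ifs <;> omega
    · obtain ⟨i, ⟨hi1, hi2⟩, rfl⟩ := hg
      rw [s_apply i (by omega)]
      split_ifs <;> omega

lemma gens_le_P {n k : ℕ} (hn : 1 ≤ n) : Subgroup.closure (gens n) ≤ P n k := by
  apply Subgroup.closure_mono
  rintro g (rfl | hg)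
  · exact Or.inl (Or.inl (by rw [if_neg (by omega)]; exact rfl))
  · exact Or.inl (Or.inr hg)

lemma sk_le_P {n k : ℕ} : Subgroup.closure (s '' Set.Ico (n+1) (n+k)) ≤ P n k :=
  Subgroup.closure_mono (fun g hg => Or.inr hg)

lemma coset_band {n k : ℕ} {u W w : Equiv.Perm ℤ} (hu : u ∈ P n k) (huB : u ∈ B (n+k))
    (hW2 : ∀ i : ℤ, 1 ≤ i → i ≤ (k:ℤ) → W ((n:ℤ)+i) = -((n:ℤ)+(k:ℤ)+1-i)) (hw : w = u * W) :
    ∀ x : ℤ, (n:ℤ)+1 ≤ x → x ≤ (n:ℤ)+(k:ℤ) →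
      (w x < 0 ∧ (n:ℤ)+1 ≤ -w x ∧ -w x ≤ (n:ℤ)+(k:ℤ)) := by
  intro x h1 h2
  have he : w x = u (W x) := by rw [hw]; rfl
  have hWx : W x = -((n:ℤ)+(k:ℤ)+1-(x - (n:ℤ))) := by
    have h := hW2 (x - (n:ℤ)) (by omega) (by omega)
    rw [show (n:ℤ)+(x-(n:ℤ)) = x by ring] at h
    exact h
  have hband := P_band hu ((n:ℤ)+(k:ℤ)+1-(x-(n:ℤ))) (by omega) (by omega)
  rw [he, hWx, B_neg huB]
  omega

lemma neg_band_inv {w : Equiv.Perm ℤ} (hsym : ∀ x : ℤ, w (-x) = -w x) {lo hi : ℤ}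
    (hlo : 0 < lo)
    (hband : ∀ x, lo ≤ x → x ≤ hi → (w x < 0 ∧ lo ≤ -w x ∧ -w x ≤ hi)) :
    ∀ x, lo ≤ x → x ≤ hi → (w⁻¹ x < 0 ∧ lo ≤ -w⁻¹ x ∧ -w⁻¹ x ≤ hi) := by
  set T := Finset.Icc lo hi with hT
  have hmaps : ∀ y ∈ T, (fun y => w (-y)) y ∈ T := by
    intro y hy
    rw [hT, Finset.mem_Icc] at hy
    show w (-y) ∈ T
    rw [hT, Finset.mem_Icc, hsym]
    have := hband y hy.1 hy.2
    omega
  have hinj : Function.Injective (fun y : ℤ => w (-y)) := by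
    intro y1 y2 h
    have h2 : w (-y1) = w (-y2) := h
    have := w.injective h2
    omega
  intro x h1 h2
  obtain ⟨y, hy, he⟩ := finset_surj hinj T hmaps x (Finset.mem_Icc.mpr ⟨h1, h2⟩)
  have he' : w (-y) = x := he
  have : w⁻¹ x = -y := by rw [← he', perm_inv_apply_self]
  rw [hT, Finset.mem_Icc] at hy
  omega

lemma chainGen {n k m : ℕ} (hm : n+k+1 ≤ m) (hk : 1 ≤ k) {v : Equiv.Perm ℤ} (hv : v ∈ B m)
    (hneg : ∀ x : ℤ, (n:ℤ)+1 ≤ x → x ≤ (n:ℤ)+(k:ℤ) → v x < 0)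
    (hpos : 0 < v ((n:ℤ)+(k:ℤ)+1)) :
    ∀ j : ℕ, j ≤ k → len m (v * rProd n k j) = len m v + j := by
  intro j
  induction j with
  | zero => intro _; rw [rProd_zero, mul_one]; omega
  | succ j ih =>
      intro hj
      rw [rProd_succ, ← mul_assoc]
      have hvr : v * rProd n k j ∈ B m := (B m).mul_mem hv (rProd_mem (by omega) hk hm)
      have hval1 : (v * rProd n k j) (((n+k-j : ℕ):ℤ)) = v ((n:ℤ)+(k:ℤ)-(j:ℤ)) := by
        rw [Equiv.Perm.mul_apply, rProd_low_apply (by omega) (by omega) (by omega)]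
        congr 1
        omega
      have hval2 : (v * rProd n k j) (((n+k-j : ℕ):ℤ)+1) = v ((n:ℤ)+(k:ℤ)+1) := by
        rw [Equiv.Perm.mul_apply, show ((n+k-j : ℕ):ℤ)+1 = (n:ℤ)+(k:ℤ)+1-(j:ℤ) by omega,
          rProd_top_apply (by omega)]
      have hasc : (v * rProd n k j) (((n+k-j : ℕ):ℤ)) <
          (v * rProd n k j) (((n+k-j : ℕ):ℤ)+1) := by
        rw [hval1, hval2]
        have := hneg ((n:ℤ)+(k:ℤ)-(j:ℤ)) (by omega) (by omega)
        omega
      rw [len_mul_s hvr (by omega) (by omega) hasc, ih (by omega)]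
      omega

end Parab
theorem baby_succ (n k : ℕ) (hk : 2 ≤ k)
    (Wnk : Equiv.Perm ℤ) (hWnk : Wnk ∈ B (n + k))
    (hWnk1 : ∀ i : ℤ, 1 ≤ i → i ≤ (n : ℤ) → Wnk i = i)
    (hWnk2 : ∀ i : ℤ, 1 ≤ i → i ≤ (k : ℤ) → Wnk ((n : ℤ) + i) = -((n : ℤ) + (k : ℤ) + 1 - i))
    (Wnk' : Equiv.Perm ℤ) (hWnk' : Wnk' ∈ B (n + k + 1))
    (hWnk'1 : ∀ i : ℤ, 1 ≤ i → i ≤ (n : ℤ) + 1 → Wnk' i = i)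
    (hWnk'2 : ∀ i : ℤ, 1 ≤ i → i ≤ (k : ℤ) →
      Wnk' ((n : ℤ) + 1 + i) = -((n : ℤ) + (k : ℤ) + 2 - i)) :
    (∀ w : Equiv.Perm ℤ, (∃ u ∈ P n k, w = u * Wnk) →
      len (n + k + 1) (cElt n k * w * (cElt n k)⁻¹)
          = len (n + k + 1) (cElt n k) + len (n + k + 1) w + len (n + k + 1) (cElt n k)⁻¹ ∧
        ∃ u ∈ P (n + 1) k, cElt n k * w * (cElt n k)⁻¹ = u * Wnk') ∧
    (∀ w : Equiv.Perm ℤ, (∃ u ∈ P (n + 1) k, w = u * Wnk') →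
      (∀ x : Equiv.Perm ℤ, bruhatLT (n + k + 1) x (cElt n k) →
        (cElt n k)⁻¹ * w * x ∉ B (n + k)) ∧
      ((∃ u ∈ P n k, (cElt n k)⁻¹ * w * cElt n k = u * Wnk) ↔
        (cElt n k)⁻¹ * w * cElt n k ∈ B (n + k))) := by
  have hm1 : 1 ≤ n + k + 1 := by omega
  have hcmem : cElt n k ∈ B (n + k + 1) := cElt_mem n k
  have hcinvmem : (cElt n k)⁻¹ ∈ B (n + k + 1) := (B _).inv_mem hcmem
  have hband' : ∀ u ∈ P (n + 1) k, ∀ x : ℤ, (n:ℤ)+2 ≤ x → x ≤ (n:ℤ)+(k:ℤ)+1 →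
      ((u * Wnk') x < 0 ∧ (n:ℤ)+2 ≤ -(u * Wnk') x ∧ -(u * Wnk') x ≤ (n:ℤ)+(k:ℤ)+1) := by
    intro u hu x h1 h2
    have huB : u ∈ B (n + 1 + k) := P_le_B' (by omega) hu
    have hW2' : ∀ i : ℤ, 1 ≤ i → i ≤ (k:ℤ) →
        Wnk' (((n+1:ℕ):ℤ)+i) = -(((n+1:ℕ):ℤ)+(k:ℤ)+1-i) := by
      intro i hi1 hi2
      push_cast
      rw [hWnk'2 i hi1 hi2]
      ring
    have hcb := coset_band (n := n+1) (k := k) hu huB hW2' rfl x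
      (by push_cast; omega) (by push_cast; omega)
    omega
  constructor
  · -- Part 1
    rintro w ⟨u, hu, rfl⟩
    have huB : u ∈ B (n + k) := P_le_B' (by omega) hu
    have hwB : u * Wnk ∈ B (n + k) := (B (n+k)).mul_mem huB hWnk
    have hwBm : u * Wnk ∈ B (n + k + 1) := B_mono (by omega) hwB
    have hband := coset_band hu huB hWnk2 rfl
    have hwfix : (u * Wnk) ((n:ℤ)+(k:ℤ)+1) = (n:ℤ)+(k:ℤ)+1 :=
      B_fix hwB (by rw [abs_of_nonneg (by omega : (0:ℤ) ≤ (n:ℤ)+(k:ℤ)+1)]; push_cast; omega)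
    have hwinvfix : (u * Wnk)⁻¹ ((n:ℤ)+(k:ℤ)+1) = (n:ℤ)+(k:ℤ)+1 := by
      nth_rewrite 1 [← hwfix]
      rw [perm_inv_apply_self]
    constructor
    · -- length statement
      have hA := chainGen (m := n+k+1) (le_refl _) (by omega) hwBm
        (fun x h1 h2 => (hband x h1 h2).1) (by rw [hwfix]; omega) k (le_refl _)
      rw [rProd_eq_cElt_inv] at hA
      have hwinvband := neg_band_inv (B_neg hwBm) (by omega : (0:ℤ) < (n:ℤ)+1) hband
      have hcwinv : cElt n k * (u * Wnk)⁻¹ ∈ B (n + k + 1) :=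
        (B _).mul_mem hcmem ((B _).inv_mem hwBm)
      have hB := chainGen (m := n+k+1) (le_refl _) (by omega) hcwinv
        (by
          intro x h1 h2
          rw [Equiv.Perm.mul_apply]
          have hw := hwinvband x h1 h2
          rw [show (u * Wnk)⁻¹ x = -(-((u * Wnk)⁻¹ x)) by ring, B_neg hcmem,
            cElt_apply_mid hw.2.1 hw.2.2]
          omega)
        (by
          rw [Equiv.Perm.mul_apply, hwinvfix, cElt_apply_top]
          omega) k (le_refl _)
      rw [rProd_eq_cElt_inv] at hB
      have e1 : cElt n k * (u * Wnk)⁻¹ * (cElt n k)⁻¹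
          = (cElt n k * (u * Wnk) * (cElt n k)⁻¹)⁻¹ := by group
      have e2 : cElt n k * (u * Wnk)⁻¹ = ((u * Wnk) * (cElt n k)⁻¹)⁻¹ := by group
      rw [e1, e2] at hB
      rw [len_inv hm1 ((B _).mul_mem ((B _).mul_mem hcmem hwBm) hcinvmem)] at hB
      rw [len_inv hm1 ((B _).mul_mem hwBm hcinvmem)] at hB
      have hlc : len (n+k+1) (cElt n k) = k := len_cElt (le_refl _)
      have hlcinv : len (n+k+1) (cElt n k)⁻¹ = k := by
        rw [len_inv hm1 hcmem, hlc]
      rw [hlc, hlcinv]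
      omega
    · -- membership statement
      have hWnk'inv : ∀ i : ℤ, 1 ≤ i → i ≤ (k:ℤ) →
          Wnk'⁻¹ ((n:ℤ)+1+i) = -((n:ℤ)+1+((k:ℤ)+1-i)) := by
        intro i h1 h2
        have h3 : Wnk' (-((n:ℤ)+1+((k:ℤ)+1-i))) = (n:ℤ)+1+i := by
          rw [B_neg hWnk', hWnk'2 ((k:ℤ)+1-i) (by omega) (by omega)]
          ring
        rw [← h3, perm_inv_apply_self]
      set W3 := cElt n k * (u * Wnk) * (cElt n k)⁻¹ with hW3def
      have hW3B : W3 ∈ B (n+k+1) := by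
        rw [hW3def]
        exact (B _).mul_mem ((B _).mul_mem hcmem hwBm) hcinvmem
      have hconj : ∀ y : ℤ, (n:ℤ)+2 ≤ y → y ≤ (n:ℤ)+(k:ℤ)+1 →
          (W3 y < 0 ∧ (n:ℤ)+2 ≤ -(W3 y) ∧ -(W3 y) ≤ (n:ℤ)+(k:ℤ)+1) := by
        intro y h1 h2
        have e : W3 y = cElt n k ((u * Wnk) ((cElt n k)⁻¹ y)) := by rw [hW3def]; rfl
        rw [e, cElt_inv_apply_mid h1 (by omega)]
        have hb := hband (y - 1) (by omega) (by omega)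
        rw [show (u * Wnk) (y - 1) = -(-((u * Wnk) (y-1))) by ring, B_neg hcmem,
          cElt_apply_mid hb.2.1 hb.2.2]
        omega
      set u' := W3 * Wnk'⁻¹ with hu'def
      have hu'B : u' ∈ B (n + k + 1) := by
        rw [hu'def]
        exact (B _).mul_mem hW3B ((B _).inv_mem hWnk')
      have hu'band : ∀ x : ℤ, ((n+1:ℕ):ℤ) < x → x ≤ ((n+k+1:ℕ):ℤ) →
          (((n+1:ℕ):ℤ) < u' x ∧ u' x ≤ ((n+k+1:ℕ):ℤ)) := by
        intro x h1 h2
        push_cast at h1 h2 ⊢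
        have e : u' x = W3 (Wnk'⁻¹ x) := by rw [hu'def]; rfl
        have hWi := hWnk'inv (x-(n:ℤ)-1) (by omega) (by omega)
        rw [show (n:ℤ)+1+(x-(n:ℤ)-1) = x by ring] at hWi
        rw [e, hWi, B_neg hW3B]
        have hc := hconj ((n:ℤ)+1+((k:ℤ)+1-(x-(n:ℤ)-1))) (by omega) (by omega)
        omega
      obtain ⟨v₁, v₂, hdec, hv₁, hv₂B, hv₂band, hv₂fix⟩ :=
        decomp (a := n+1) (b := n+k+1) (by omega) hu'B hu'band
      have hv₁P : v₁ ∈ P (n+1) k := gens_le_P (by omega) (mem_closure_gens (by omega) hv₁)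
      have hv₂P : v₂ ∈ P (n+1) k := by
        have hcl := interval_gen (a := n+1) (b := n+k+1)
          (invI (((n+1:ℕ):ℤ)+1) ((n+k+1:ℕ):ℤ) ⇑v₂) v₂ hv₂B hv₂band hv₂fix rfl
        have hle := sk_le_P (n := n+1) (k := k)
        rw [show n+1+k = n+k+1 from by omega] at hle
        exact hle hcl
      refine ⟨v₁ * v₂, (P (n+1) k).mul_mem hv₁P hv₂P, ?_⟩
      rw [← hdec, hu'def]
      group
  · -- Part 2
    rintro w ⟨u, hu, rfl⟩
    have huB : u ∈ B (n + k + 1) := by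
      have h := P_le_B' (n := n+1) (k := k) (by omega) hu
      rw [show n+1+k = n+k+1 from by omega] at h
      exact h
    have hwB : u * Wnk' ∈ B (n + k + 1) := (B _).mul_mem huB hWnk'
    have hbw := hband' u hu
    constructor
    · -- Bruhat part
      intro x hx hmem
      obtain ⟨hne, L, hgL, hprodL, hlenL, L', hsub, hprodx⟩ := hx
      have hlenc : len (n+k+1) (cElt n k) = k := len_cElt (le_refl _)
      rw [hlenc] at hlenL
      have hLcanon := uword k n (le_refl _) L hgL hprodL hlenL
      rw [canon_word] at hLcanon
      rw [hLcanon] at hsub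
      obtain ⟨J, hJ, rfl⟩ := List.sublist_map_iff.mp hsub
      subst hprodx
      have hsw := subword_apply k (n+1) (by omega) J hJ
      have hpt : (((n+1:ℕ):ℤ)) + (k:ℤ) = (n:ℤ)+(k:ℤ)+1 := by push_cast; ring
      rw [hpt] at hsw
      have hfm : ((cElt n k)⁻¹ * (u * Wnk') * (J.map s).prod) ((n:ℤ)+(k:ℤ)+1)
          = (n:ℤ)+(k:ℤ)+1 :=
        B_fix hmem (by rw [abs_of_nonneg (by omega : (0:ℤ) ≤ (n:ℤ)+(k:ℤ)+1)]; push_cast; omega)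
      rcases eq_or_lt_of_le hsw.1.1 with h1 | h1
      · have hJfull := hsw.2 h1.symm
        apply hne
        rw [hJfull, ← canon_word]
        rfl
      · have hval : ((cElt n k)⁻¹ * (u * Wnk') * (J.map s).prod) ((n:ℤ)+(k:ℤ)+1)
            = (cElt n k)⁻¹ ((u * Wnk') ((J.map s).prod ((n:ℤ)+(k:ℤ)+1))) := rfl
        have hb := hbw ((J.map s).prod ((n:ℤ)+(k:ℤ)+1))
          (by push_cast at h1; omega) hsw.1.2
        rw [hval, show (u * Wnk') ((J.map s).prod ((n:ℤ)+(k:ℤ)+1))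
            = -(-((u * Wnk') ((J.map s).prod ((n:ℤ)+(k:ℤ)+1)))) by ring,
          B_neg hcinvmem, cElt_inv_apply_mid hb.2.1 hb.2.2] at hfm
        omega
    · constructor
      · rintro ⟨u₀, hu₀, he⟩
        rw [he]
        exact (B (n+k)).mul_mem (P_le_B' (by omega) hu₀) (by exact hWnk)
      · intro hmem
        have hWnkinv : ∀ i : ℤ, 1 ≤ i → i ≤ (k:ℤ) →
            Wnk⁻¹ ((n:ℤ)+i) = -((n:ℤ)+((k:ℤ)+1-i)) := by
          intro i h1 h2
          have h3 : Wnk (-((n:ℤ)+((k:ℤ)+1-i))) = (n:ℤ)+i := by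
            rw [B_neg hWnk, hWnk2 ((k:ℤ)+1-i) (by omega) (by omega)]
            ring
          rw [← h3, perm_inv_apply_self]
        set W3 := (cElt n k)⁻¹ * (u * Wnk') * cElt n k with hW3def
        have hW3B : W3 ∈ B (n+k) := hmem
        have hconj2 : ∀ z : ℤ, (n:ℤ)+1 ≤ z → z ≤ (n:ℤ)+(k:ℤ) →
            (W3 z < 0 ∧ (n:ℤ)+1 ≤ -(W3 z) ∧ -(W3 z) ≤ (n:ℤ)+(k:ℤ)) := by
          intro z h1 h2
          have e : W3 z = (cElt n k)⁻¹ ((u * Wnk') (cElt n k z)) := by rw [hW3def]; rfl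
          rw [e, cElt_apply_mid h1 h2]
          have hb := hbw (z+1) (by omega) (by omega)
          rw [show (u * Wnk') (z+1) = -(-((u * Wnk') (z+1))) by ring, B_neg hcinvmem,
            cElt_inv_apply_mid hb.2.1 hb.2.2]
          omega
        set v' := W3 * Wnk⁻¹ with hv'def
        have hv'B : v' ∈ B (n+k) := (B _).mul_mem hW3B ((B _).inv_mem hWnk)
        have hv'band : ∀ x : ℤ, ((n:ℕ):ℤ) < x → x ≤ ((n+k:ℕ):ℤ) →
            (((n:ℕ):ℤ) < v' x ∧ v' x ≤ ((n+k:ℕ):ℤ)) := by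
          intro x h1 h2
          push_cast at h1 h2 ⊢
          have e : v' x = W3 (Wnk⁻¹ x) := by rw [hv'def]; rfl
          have hWi := hWnkinv (x-(n:ℤ)) (by omega) (by omega)
          rw [show (n:ℤ)+(x-(n:ℤ)) = x by ring] at hWi
          rw [e, hWi, B_neg (B_mono (le_refl _) hW3B)]
          have hc := hconj2 ((n:ℤ)+((k:ℤ)+1-(x-(n:ℤ)))) (by omega) (by omega)
          omega
        obtain ⟨v₁, v₂, hdec, hv₁, hv₂B, hv₂band, hv₂fix⟩ :=
          decomp (a := n) (b := n+k) (by omega) hv'B hv'band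
        have hv₁P : v₁ ∈ P n k := by
          rcases Nat.eq_zero_or_pos n with hn | hn
          · subst hn
            rw [B_zero_eq_one hv₁]
            exact (P 0 k).one_mem
          · exact gens_le_P hn (mem_closure_gens hn hv₁)
        have hv₂P : v₂ ∈ P n k :=
          sk_le_P (interval_gen _ v₂ hv₂B hv₂band hv₂fix rfl)
        refine ⟨v₁ * v₂, (P n k).mul_mem hv₁P hv₂P, ?_⟩
        rw [← hdec, hv'def]
        group
end PaperB
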